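/- arXiv:1210.6749 — 8 statements merged into one kernel-verified Lean document; each statement's English description precedes it below -/
import Mathlib

section
/- Let p > 2. Then the function f(x) = tan_p(x)^(p−2) − tanh_p(x)^(p−2) is strictly increasing on the interval (0, π_p/2). -/
open Real Set Filter Topology

/-- Generalized inverse sine: `arcsin_p x = ∫₀ˣ (1 - tᵖ)^(-1/p) dt`. -/
noncomputable def arcsinp (p : ℝ) (x : ℝ) : ℝ := ∫ t in (0:ℝ)..x, (1 - t ^ p) ^ (-1 / p)

/-- Generalized π: `π_p = 2 · arcsin_p 1`. -/
noncomputable def pip (p : ℝ) : ℝ := 2 * arcsinp p 1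

/-- Generalized sine: the inverse of `arcsinp p` (as a map from `[0,1]`). -/
noncomputable def sinp (p : ℝ) : ℝ → ℝ := Function.invFunOn (arcsinp p) (Set.Icc 0 1)

/-- Generalized cosine. -/
noncomputable def cosp (p : ℝ) (x : ℝ) : ℝ := (1 - (sinp p x) ^ p) ^ (1 / p)

/-- Generalized tangent. -/
noncomputable def tanp (p : ℝ) (x : ℝ) : ℝ := sinp p x / cosp p x

/-- Generalized inverse hyperbolic sine: `arsinh_p x = ∫₀ˣ (1 + tᵖ)^(-1/p) dt`. -/
noncomputable def arsinhp (p : ℝ) (x : ℝ) : ℝ := ∫ t in (0:ℝ)..x, (1 + t ^ p) ^ (-1 / p)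

/-- Generalized hyperbolic sine: the inverse of `arsinhp p` (as a map from `[0,∞)`). -/
noncomputable def sinhp (p : ℝ) : ℝ → ℝ := Function.invFunOn (arsinhp p) (Set.Ici 0)

/-- Generalized hyperbolic cosine. -/
noncomputable def coshp (p : ℝ) (x : ℝ) : ℝ := (1 + (sinhp p x) ^ p) ^ (1 / p)

/-- Generalized hyperbolic tangent. -/
noncomputable def tanhp (p : ℝ) (x : ℝ) : ℝ := sinhp p x / coshp p x

section Aux
open MeasureTheory intervalIntegral

namespace PT

variable {p : ℝ}

/-- the arcsin integrand -/
noncomputable def sg (p t : ℝ) : ℝ := (1 - t ^ p) ^ (-1 / p)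
/-- the arsinh integrand -/
noncomputable def hg (p t : ℝ) : ℝ := (1 + t ^ p) ^ (-1 / p)

lemma sg_meas (p : ℝ) : Measurable (sg p) :=
  (measurable_const.sub (measurable_id.pow_const p)).pow_const (-1/p)

lemma sg_contAt (hp : 0 < p) {t : ℝ} (ht : t ^ p ≠ 1) : ContinuousAt (sg p) t := by
  have h1 : ContinuousAt (fun t : ℝ => 1 - t ^ p) t :=
    (continuous_const.sub (Real.continuous_rpow_const hp.le)).continuousAt
  exact h1.rpow_const (Or.inl (by simpa [sub_eq_zero] using fun h => ht h.symm))

lemma hg_contAt (hp : 0 < p) {t : ℝ} (ht : 0 ≤ t) : ContinuousAt (hg p) t := by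
  have h1 : ContinuousAt (fun t : ℝ => 1 + t ^ p) t :=
    (continuous_const.add (Real.continuous_rpow_const hp.le)).continuousAt
  have h2 : 0 ≤ t ^ p := Real.rpow_nonneg ht _
  have : (1 : ℝ) + t ^ p ≠ 0 := by positivity
  exact h1.rpow_const (Or.inl this)

lemma sg_pos (hp : 0 < p) {t : ℝ} (h0 : 0 ≤ t) (h1 : t < 1) : 0 < sg p t := by
  have : t ^ p < 1 := Real.rpow_lt_one h0 h1 hp
  exact Real.rpow_pos_of_pos (by linarith) _

lemma hg_pos (hp : 0 < p) {t : ℝ} (h0 : 0 ≤ t) : 0 < hg p t := by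
  have : 0 ≤ t ^ p := Real.rpow_nonneg h0 _
  exact Real.rpow_pos_of_pos (by linarith) _

lemma sg_intable (hp : 1 < p) : IntervalIntegrable (sg p) volume 0 1 := by
  have hp0 : 0 < p := by linarith
  have hbig : IntervalIntegrable (fun t : ℝ => (1 - t) ^ (-1/p)) volume 0 1 := by
    have h : IntervalIntegrable (fun t : ℝ => t ^ (-1/p)) volume 0 1 := by
      apply intervalIntegrable_rpow'
      rw [neg_div]
      have : 1/p < 1 := by rw [div_lt_one hp0]; linarith
      linarith
    have := (h.comp_sub_left 1).symm
    simpa using this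
  apply hbig.mono_fun ((sg_meas p).aestronglyMeasurable)
  rw [Filter.EventuallyLE, ae_restrict_iff' measurableSet_uIoc]
  filter_upwards with t ht
  rw [Set.uIoc_of_le (by norm_num : (0:ℝ) ≤ 1)] at ht
  obtain ⟨ht0, ht1⟩ := ht
  have htp : t ^ p ≤ t := by
    calc t ^ p ≤ t ^ (1:ℝ) := Real.rpow_le_rpow_of_exponent_ge ht0 ht1 (by linarith)
    _ = t := Real.rpow_one t
  have h1 : 0 ≤ 1 - t := by linarith
  have h2 : 1 - t ≤ 1 - t ^ p := by linarith
  have key : sg p t ≤ (1 - t) ^ (-1/p) := by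
    rcases eq_or_lt_of_le h1 with h | h
    · have h1t : 1 - t = 0 := h.symm
      have htp1 : t ^ p = 1 := by
        have ht1' : t = 1 := by linarith
        rw [ht1', Real.one_rpow]
      have hne : (-1/p : ℝ) ≠ 0 := by
        simp only [neg_div, neg_ne_zero]
        positivity
      simp [sg, htp1, h1t, Real.zero_rpow hne]
    · exact Real.rpow_le_rpow_of_nonpos h h2 (by rw [neg_div]; simp; positivity)
  have hnn : 0 ≤ sg p t := Real.rpow_nonneg (by linarith) _
  rw [Real.norm_eq_abs, Real.norm_eq_abs, abs_of_nonneg hnn,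
    abs_of_nonneg (Real.rpow_nonneg h1 _)]
  exact key

lemma hg_intable (hp : 1 < p) {R : ℝ} (hR : 0 ≤ R) : IntervalIntegrable (hg p) volume 0 R := by
  have hp0 : 0 < p := by linarith
  apply ContinuousOn.intervalIntegrable
  intro t ht
  rw [Set.uIcc_of_le hR] at ht
  exact (hg_contAt hp0 ht.1).continuousWithinAt

end PT
end Aux
section Aux2
open MeasureTheory intervalIntegral

namespace PT

variable {p : ℝ}

lemma arcsinp_eq (p x : ℝ) : arcsinp p x = ∫ t in (0:ℝ)..x, sg p t := rfl

lemma arcsinp_zero (p : ℝ) : arcsinp p 0 = 0 := by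
  simp [arcsinp]

lemma sg_intable' (hp : 1 < p) {a b : ℝ} (ha : a ∈ Set.Icc (0:ℝ) 1)
    (hb : b ∈ Set.Icc (0:ℝ) 1) : IntervalIntegrable (sg p) volume a b := by
  apply (sg_intable hp).mono_set
  rw [Set.uIcc_of_le (by norm_num : (0:ℝ) ≤ 1)]
  exact Set.uIcc_subset_Icc ha hb

lemma arcsinp_strictMono (hp : 1 < p) : StrictMonoOn (arcsinp p) (Set.Icc 0 1) := by
  intro a ha b hb hab
  have h1 : arcsinp p b - arcsinp p a = ∫ t in a..b, sg p t := by
    rw [arcsinp_eq, arcsinp_eq, ← intervalIntegral.integral_interval_sub_left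
      (sg_intable' hp ⟨le_refl 0, by norm_num⟩ hb) (sg_intable' hp ⟨le_refl 0, by norm_num⟩ ha)]
  have h2 : 0 < ∫ t in a..b, sg p t := by
    apply intervalIntegral_pos_of_pos_on (sg_intable' hp ha hb)
    · intro t ht
      exact sg_pos (by linarith) (le_trans ha.1 ht.1.le) (lt_of_lt_of_le ht.2 hb.2)
    · exact hab
  linarith [h1, h2]

lemma arcsinp_contOn (hp : 1 < p) : ContinuousOn (arcsinp p) (Set.Icc 0 1) := by
  have h : IntegrableOn (sg p) (Set.Icc 0 1) volume := by
    rw [integrableOn_Icc_iff_integrableOn_Ioc]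
    exact ((sg_intable hp).1)
  have := intervalIntegral.continuousOn_primitive_interval
    (by rwa [Set.uIcc_of_le (by norm_num : (0:ℝ) ≤ 1)] : IntegrableOn (sg p) (Set.uIcc 0 1) volume)
  rwa [Set.uIcc_of_le (by norm_num : (0:ℝ) ≤ 1)] at this

lemma arcsinp_pos (hp : 1 < p) : 0 < arcsinp p 1 := by
  have := arcsinp_strictMono hp (by norm_num : (0:ℝ) ∈ Set.Icc (0:ℝ) 1)
    (by norm_num : (1:ℝ) ∈ Set.Icc (0:ℝ) 1) one_pos
  rwa [arcsinp_zero] at this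

lemma pip_half (p : ℝ) : pip p / 2 = arcsinp p 1 := by
  rw [pip]; ring

lemma sinp_spec (hp : 1 < p) {y : ℝ} (hy : y ∈ Set.Icc 0 (arcsinp p 1)) :
    sinp p y ∈ Set.Icc (0:ℝ) 1 ∧ arcsinp p (sinp p y) = y := by
  have hex : ∃ s ∈ Set.Icc (0:ℝ) 1, arcsinp p s = y := by
    have := intermediate_value_Icc (by norm_num : (0:ℝ) ≤ 1) (arcsinp_contOn hp)
    rw [arcsinp_zero] at this
    obtain ⟨s, hs, hsy⟩ := this hy
    exact ⟨s, hs, hsy⟩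
  exact ⟨Function.invFunOn_mem hex, Function.invFunOn_eq hex⟩

lemma mem_of_arcsinp {s : ℝ} (hp : 1 < p) (hs : s ∈ Set.Icc (0:ℝ) 1) :
    arcsinp p s ∈ Set.Icc 0 (arcsinp p 1) := by
  constructor
  · rw [← arcsinp_zero p]
    rcases eq_or_lt_of_le hs.1 with h | h
    · rw [← h]
    · exact (arcsinp_strictMono hp (by norm_num) hs h).le
  · rcases eq_or_lt_of_le hs.2 with h | h
    · rw [h]
    · exact (arcsinp_strictMono hp hs (by norm_num) h).le

lemma sinp_eq (hp : 1 < p) {s y : ℝ} (hs : s ∈ Set.Icc (0:ℝ) 1)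
    (h : arcsinp p s = y) : sinp p y = s := by
  have hy : y ∈ Set.Icc 0 (arcsinp p 1) := h ▸ mem_of_arcsinp hp hs
  obtain ⟨hmem, heq⟩ := sinp_spec hp hy
  exact (arcsinp_strictMono hp).injOn hmem hs (by rw [heq, h])

lemma sinp_zero (hp : 1 < p) : sinp p 0 = 0 :=
  sinp_eq hp (by norm_num) (arcsinp_zero p)

lemma sinp_monoOn (hp : 1 < p) : MonotoneOn (sinp p) (Set.Icc 0 (arcsinp p 1)) := by
  intro a ha b hb hab
  obtain ⟨hma, hea⟩ := sinp_spec hp ha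
  obtain ⟨hmb, heb⟩ := sinp_spec hp hb
  by_contra hlt
  push_neg at hlt
  have := arcsinp_strictMono hp hmb hma hlt
  rw [hea, heb] at this
  linarith

lemma sinp_mem_Ioo (hp : 1 < p) {x : ℝ} (hx : x ∈ Set.Ioo 0 (arcsinp p 1)) :
    sinp p x ∈ Set.Ioo (0:ℝ) 1 := by
  obtain ⟨hm, he⟩ := sinp_spec hp (Set.mem_Icc_of_Ioo hx)
  constructor
  · rcases eq_or_lt_of_le hm.1 with h | h
    · exfalso
      have : arcsinp p 0 = x := by rw [h]; exact he
      rw [arcsinp_zero] at this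
      exact hx.1.ne this
    · exact h
  · rcases eq_or_lt_of_le hm.2 with h | h
    · exfalso
      have : arcsinp p 1 = x := by rw [← h]; exact he
      exact hx.2.ne' this
    · exact h

end PT
end Aux2
section Aux3
open MeasureTheory intervalIntegral

namespace PT

variable {p : ℝ}

lemma arsinhp_eq (p x : ℝ) : arsinhp p x = ∫ t in (0:ℝ)..x, hg p t := rfl

lemma arsinhp_zero (p : ℝ) : arsinhp p 0 = 0 := by simp [arsinhp]

lemma hg_intable' (hp : 1 < p) {a b : ℝ} (ha : 0 ≤ a) (hb : 0 ≤ b) :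
    IntervalIntegrable (hg p) volume a b := by
  rcases le_total a b with h | h
  · apply (hg_intable hp hb).mono_set
    rw [Set.uIcc_of_le h, Set.uIcc_of_le hb]
    exact Set.Icc_subset_Icc ha le_rfl
  · apply ((hg_intable hp ha).mono_set ?_).symm
    rw [Set.uIcc_of_le h, Set.uIcc_of_le ha]
    exact Set.Icc_subset_Icc hb le_rfl

lemma arsinhp_strictMono (hp : 1 < p) : StrictMonoOn (arsinhp p) (Set.Ici 0) := by
  intro a ha b hb hab
  have h1 : arsinhp p b - arsinhp p a = ∫ t in a..b, hg p t := by
    rw [arsinhp_eq, arsinhp_eq, ← intervalIntegral.integral_interval_sub_left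
      (hg_intable' hp le_rfl hb) (hg_intable' hp le_rfl ha)]
  have h2 : 0 < ∫ t in a..b, hg p t := by
    apply intervalIntegral_pos_of_pos_on (hg_intable' hp ha hb)
    · intro t ht
      exact hg_pos (by linarith) (le_trans ha ht.1.le)
    · exact hab
  linarith

lemma arsinhp_contOn (hp : 1 < p) {R : ℝ} (hR : 0 ≤ R) :
    ContinuousOn (arsinhp p) (Set.Icc 0 R) := by
  have h : IntegrableOn (hg p) (Set.uIcc 0 R) volume := by
    rw [Set.uIcc_of_le hR, integrableOn_Icc_iff_integrableOn_Ioc]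
    exact (hg_intable hp hR).1
  have := intervalIntegral.continuousOn_primitive_interval h
  rwa [Set.uIcc_of_le hR] at this

lemma arsinhp_big (hp : 1 < p) (c : ℝ) : ∃ R, 0 ≤ R ∧ c ≤ arsinhp p R := by
  have hp0 : 0 < p := by linarith
  rcases le_total c 0 with hc | hc
  · exact ⟨0, le_rfl, by rw [arsinhp_zero]; linarith⟩
  set R := max 1 (Real.exp (2 * c)) with hRdef
  have hR1 : (1:ℝ) ≤ R := le_max_left _ _
  have hR0 : (0:ℝ) ≤ R := by linarith
  refine ⟨R, hR0, ?_⟩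
  have hsplit : arsinhp p R = (∫ t in (0:ℝ)..1, hg p t) + ∫ t in (1:ℝ)..R, hg p t := by
    rw [arsinhp_eq, intervalIntegral.integral_add_adjacent_intervals
      (hg_intable' hp le_rfl zero_le_one) (hg_intable' hp zero_le_one hR0)]
  have h1 : 0 ≤ ∫ t in (0:ℝ)..1, hg p t := by
    apply intervalIntegral.integral_nonneg zero_le_one
    intro t ht
    exact (hg_pos hp0 ht.1).le
  have hcmp : ∀ t ∈ Set.Icc (1:ℝ) R, (2 * t)⁻¹ ≤ hg p t := by
    intro t ht
    have ht1 : (1:ℝ) ≤ t := ht.1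
    have ht0 : (0:ℝ) < t := by linarith
    have htp : (1:ℝ) ≤ t ^ p := Real.one_le_rpow ht1 hp0.le
    have h2t : (1:ℝ) + t ^ p ≤ (2 * t) ^ p := by
      have e1 : (2 * t) ^ p = 2 ^ p * t ^ p := Real.mul_rpow (by norm_num) ht0.le
      have e2 : (2:ℝ) ≤ 2 ^ p := by
        calc (2:ℝ) = 2 ^ (1:ℝ) := (Real.rpow_one 2).symm
        _ ≤ 2 ^ p := Real.rpow_le_rpow_of_exponent_le (by norm_num) (by linarith)
      nlinarith
    have hle := Real.rpow_le_rpow_of_nonpos (by positivity) h2t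
      (by rw [neg_div]; simp; positivity : (-1/p : ℝ) ≤ 0)
    have heq : ((2*t) ^ p) ^ (-1/p : ℝ) = (2*t)⁻¹ := by
      rw [← Real.rpow_mul (by positivity)]
      have : p * (-1/p) = -1 := by field_simp
      rw [this, Real.rpow_neg_one]
    rw [heq] at hle
    exact hle
  have h2 : (∫ t in (1:ℝ)..R, (2*t)⁻¹) ≤ ∫ t in (1:ℝ)..R, hg p t := by
    apply intervalIntegral.integral_mono_on hR1
    · apply ContinuousOn.intervalIntegrable
      intro t ht
      rw [Set.uIcc_of_le hR1] at ht
      have : t ≠ 0 := by intro h; rw [h] at ht; linarith [ht.1]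
      exact ((continuous_const.mul continuous_id).continuousAt.inv₀
        (by simpa using this)).continuousWithinAt
    · exact hg_intable' hp zero_le_one hR0
    · exact hcmp
  have h3 : (∫ t in (1:ℝ)..R, (2*t)⁻¹) = Real.log R / 2 := by
    have : ∀ t : ℝ, (2*t)⁻¹ = (2:ℝ)⁻¹ * t⁻¹ := by intro t; rw [mul_inv]
    simp_rw [this]
    rw [intervalIntegral.integral_const_mul]
    rw [integral_inv (by
      rw [Set.uIcc_of_le hR1]
      intro h
      linarith [h.1] : (0:ℝ) ∉ Set.uIcc (1:ℝ) R)]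
    rw [div_one]
    ring
  have h4 : c ≤ Real.log R / 2 := by
    have : Real.log (Real.exp (2*c)) ≤ Real.log R :=
      Real.log_le_log (Real.exp_pos _) (le_max_right _ _)
    rw [Real.log_exp] at this
    linarith
  linarith

end PT
end Aux3
section Aux4
open MeasureTheory intervalIntegral

namespace PT

variable {p : ℝ}

lemma sinhp_spec (hp : 1 < p) {y : ℝ} (hy : 0 ≤ y) :
    0 ≤ sinhp p y ∧ arsinhp p (sinhp p y) = y := by
  have hex : ∃ s ∈ Set.Ici (0:ℝ), arsinhp p s = y := by
    obtain ⟨R, hR0, hRy⟩ := arsinhp_big hp y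
    have := intermediate_value_Icc hR0 (arsinhp_contOn hp hR0)
    rw [arsinhp_zero] at this
    obtain ⟨s, hs, hsy⟩ := this ⟨hy, hRy⟩
    exact ⟨s, hs.1, hsy⟩
  exact ⟨Function.invFunOn_mem hex, Function.invFunOn_eq hex⟩

lemma sinhp_eq (hp : 1 < p) {s y : ℝ} (hs : 0 ≤ s) (h : arsinhp p s = y) :
    sinhp p y = s := by
  have hy : 0 ≤ y := by
    rw [← h, ← arsinhp_zero p]
    rcases eq_or_lt_of_le hs with h' | h'
    · rw [← h']
    · exact (arsinhp_strictMono hp (Set.mem_Ici.mpr le_rfl) hs h').le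
  obtain ⟨hmem, heq⟩ := sinhp_spec hp hy
  exact (arsinhp_strictMono hp).injOn hmem hs (by rw [heq, h])

lemma sinhp_zero (hp : 1 < p) : sinhp p 0 = 0 :=
  sinhp_eq hp le_rfl (arsinhp_zero p)

lemma sinhp_monoOn (hp : 1 < p) : MonotoneOn (sinhp p) (Set.Ici 0) := by
  intro a ha b hb hab
  obtain ⟨hma, hea⟩ := sinhp_spec hp ha
  obtain ⟨hmb, heb⟩ := sinhp_spec hp hb
  by_contra hlt
  push_neg at hlt
  have := arsinhp_strictMono hp hmb hma hlt
  rw [hea, heb] at this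
  linarith

lemma sinhp_pos (hp : 1 < p) {y : ℝ} (hy : 0 < y) : 0 < sinhp p y := by
  obtain ⟨hm, he⟩ := sinhp_spec hp hy.le
  rcases eq_or_lt_of_le hm with h | h
  · exfalso
    have : arsinhp p 0 = y := by rw [h]; exact he
    rw [arsinhp_zero] at this
    exact hy.ne this
  · exact h

end PT
end Aux4
section Aux5
open MeasureTheory intervalIntegral

namespace PT

variable {p : ℝ}

lemma hg_meas (p : ℝ) : Measurable (hg p) :=
  (measurable_const.add (measurable_id.pow_const p)).pow_const (-1/p)

lemma sinp_contAt (hp : 1 < p) {x : ℝ} (hx : x ∈ Set.Ioo 0 (arcsinp p 1)) :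
    ContinuousAt (sinp p) x := by
  apply continuousAt_of_monotoneOn_of_image_mem_nhds (sinp_monoOn hp)
    (Icc_mem_nhds hx.1 hx.2)
  apply Filter.mem_of_superset (isOpen_Ioo.mem_nhds (sinp_mem_Ioo hp hx))
  intro s hs
  exact ⟨arcsinp p s, mem_of_arcsinp hp (Set.mem_Icc_of_Ioo hs),
    sinp_eq hp (Set.mem_Icc_of_Ioo hs) rfl⟩

lemma arcsinp_hasDerivAt (hp : 1 < p) {s : ℝ} (hs : s ∈ Set.Ioo (0:ℝ) 1) :
    HasDerivAt (arcsinp p) (sg p s) s := by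
  have hsp : s ^ p < 1 := Real.rpow_lt_one hs.1.le hs.2 (by linarith)
  exact intervalIntegral.integral_hasDerivAt_right
    (sg_intable' hp ⟨le_rfl, zero_le_one⟩ ⟨hs.1.le, hs.2.le⟩)
    ((sg_meas p).stronglyMeasurable.stronglyMeasurableAtFilter)
    (sg_contAt (by linarith) hsp.ne)

lemma sinp_hasDerivAt (hp : 1 < p) {x : ℝ} (hx : x ∈ Set.Ioo 0 (arcsinp p 1)) :
    HasDerivAt (sinp p) ((1 - sinp p x ^ p) ^ (1/p)) x := by
  have hs := sinp_mem_Ioo hp hx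
  have hsp : sinp p x ^ p < 1 := Real.rpow_lt_one hs.1.le hs.2 (by linarith)
  have hpos : 0 < sg p (sinp p x) := sg_pos (by linarith) hs.1.le hs.2
  have hev : ∀ᶠ y in nhds x, arcsinp p (sinp p y) = y := by
    apply Filter.eventually_of_mem (isOpen_Ioo.mem_nhds hx)
    intro y hy
    exact (sinp_spec hp (Set.mem_Icc_of_Ioo hy)).2
  have h := HasDerivAt.of_local_left_inverse (sinp_contAt hp hx)
    (arcsinp_hasDerivAt hp hs) hpos.ne' hev
  have heq : (sg p (sinp p x))⁻¹ = (1 - sinp p x ^ p) ^ (1/p) := by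
    rw [sg, neg_div, Real.rpow_neg (by linarith), inv_inv]
  rwa [heq] at h

lemma sinhp_contAt (hp : 1 < p) {x : ℝ} (hx : 0 < x) :
    ContinuousAt (sinhp p) x := by
  apply continuousAt_of_monotoneOn_of_image_mem_nhds (sinhp_monoOn hp)
    (Ici_mem_nhds hx)
  apply Filter.mem_of_superset (isOpen_Ioi.mem_nhds (sinhp_pos hp hx))
  intro s hs
  have hs0 : (0:ℝ) ≤ s := le_of_lt hs
  exact ⟨arsinhp p s, by
    rw [Set.mem_Ici, ← arsinhp_zero p]
    rcases eq_or_lt_of_le hs0 with h | h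
    · rw [h]
    · exact (arsinhp_strictMono hp (Set.mem_Ici.mpr le_rfl) hs0 h).le, sinhp_eq hp hs0 rfl⟩

lemma arsinhp_hasDerivAt (hp : 1 < p) {v : ℝ} (hv : 0 < v) :
    HasDerivAt (arsinhp p) (hg p v) v :=
  intervalIntegral.integral_hasDerivAt_right (hg_intable' hp le_rfl hv.le)
    ((hg_meas p).stronglyMeasurable.stronglyMeasurableAtFilter)
    (hg_contAt (by linarith) hv.le)

lemma sinhp_hasDerivAt (hp : 1 < p) {x : ℝ} (hx : 0 < x) :
    HasDerivAt (sinhp p) ((1 + sinhp p x ^ p) ^ (1/p)) x := by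
  have hv := sinhp_pos hp hx
  have hvp : 0 < sinhp p x ^ p := Real.rpow_pos_of_pos hv _
  have hpos : 0 < hg p (sinhp p x) := hg_pos (by linarith) hv.le
  have hev : ∀ᶠ y in nhds x, arsinhp p (sinhp p y) = y := by
    apply Filter.eventually_of_mem (isOpen_Ioi.mem_nhds hx)
    intro y hy
    exact (sinhp_spec hp (le_of_lt hy)).2
  have h := HasDerivAt.of_local_left_inverse (sinhp_contAt hp hx)
    (arsinhp_hasDerivAt hp hv) hpos.ne' hev
  have heq : (hg p (sinhp p x))⁻¹ = (1 + sinhp p x ^ p) ^ (1/p) := by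
    rw [hg, neg_div, Real.rpow_neg (by linarith), inv_inv]
  rwa [heq] at h

lemma sinp_cwa0 (hp : 1 < p) : ContinuousWithinAt (sinp p) (Set.Ici 0) 0 := by
  apply continuousWithinAt_right_of_monotoneOn_of_image_mem_nhdsWithin (sinp_monoOn hp)
  · exact Icc_mem_nhdsGE_of_mem ⟨le_rfl, arcsinp_pos hp⟩
  · rw [sinp_zero hp]
    apply Filter.mem_of_superset (Icc_mem_nhdsGE_of_mem
      (⟨le_rfl, one_pos⟩ : (0:ℝ) ∈ Set.Ico 0 1))
    intro s hs
    exact ⟨arcsinp p s, mem_of_arcsinp hp hs, sinp_eq hp hs rfl⟩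

lemma sinhp_cwa0 (hp : 1 < p) : ContinuousWithinAt (sinhp p) (Set.Ici 0) 0 := by
  apply continuousWithinAt_right_of_monotoneOn_of_image_mem_nhdsWithin (sinhp_monoOn hp)
  · exact self_mem_nhdsWithin
  · rw [sinhp_zero hp]
    apply Filter.mem_of_superset self_mem_nhdsWithin
    intro s hs
    exact ⟨arsinhp p s, by
      rw [Set.mem_Ici, ← arsinhp_zero p]
      rcases eq_or_lt_of_le (Set.mem_Ici.mp hs) with h | h
      · rw [h]
      · exact (arsinhp_strictMono hp (Set.mem_Ici.mpr le_rfl) hs h).le, sinhp_eq hp hs rfl⟩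

end PT
end Aux5
section Aux6
open MeasureTheory intervalIntegral

namespace PT

variable {p : ℝ}

lemma sinp_lt_one (hp : 1 < p) {x : ℝ} (hx : x ∈ Set.Ico 0 (arcsinp p 1)) :
    sinp p x < 1 := by
  have hx' : x ∈ Set.Icc 0 (arcsinp p 1) := Set.mem_Icc_of_Ico hx
  obtain ⟨hm, he⟩ := sinp_spec hp hx'
  rcases eq_or_lt_of_le hm.2 with h | h
  · exfalso
    have : arcsinp p 1 = x := by rw [← h]; exact he
    exact hx.2.ne' this
  · exact h

lemma cosp_pos (hp : 1 < p) {x : ℝ} (hx : x ∈ Set.Ico 0 (arcsinp p 1)) :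
    0 < cosp p x := by
  have hs := (sinp_spec hp (Set.mem_Icc_of_Ico hx)).1
  have h : sinp p x ^ p < 1 := Real.rpow_lt_one hs.1 (sinp_lt_one hp hx) (by linarith)
  exact Real.rpow_pos_of_pos (by linarith) _

lemma tanp_zero (hp : 1 < p) : tanp p 0 = 0 := by
  rw [tanp, sinp_zero hp, zero_div]

lemma tanhp_zero (hp : 1 < p) : tanhp p 0 = 0 := by
  rw [tanhp, sinhp_zero hp, zero_div]

lemma coshp_pos (hp : 1 < p) {x : ℝ} (hx : 0 ≤ x) : 0 < coshp p x := by
  have hv := (sinhp_spec hp hx).1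
  have : 0 ≤ sinhp p x ^ p := Real.rpow_nonneg hv _
  exact Real.rpow_pos_of_pos (by linarith) _

lemma tanp_pos (hp : 1 < p) {x : ℝ} (hx : x ∈ Set.Ioo 0 (arcsinp p 1)) :
    0 < tanp p x :=
  div_pos (sinp_mem_Ioo hp hx).1 (cosp_pos hp ⟨hx.1.le, hx.2⟩)

lemma tanhp_pos (hp : 1 < p) {x : ℝ} (hx : 0 < x) : 0 < tanhp p x :=
  div_pos (sinhp_pos hp hx) (coshp_pos hp hx.le)

lemma tanhp_lt_one (hp : 1 < p) {x : ℝ} (hx : 0 ≤ x) : tanhp p x < 1 := by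
  have hv := (sinhp_spec hp hx).1
  have hvp : 0 ≤ sinhp p x ^ p := Real.rpow_nonneg hv _
  rw [tanhp, div_lt_one (coshp_pos hp hx), coshp]
  calc sinhp p x = (sinhp p x ^ p) ^ (1/p) := by
        rw [← Real.rpow_mul hv, mul_one_div, div_self (by linarith : p ≠ 0),
          Real.rpow_one]
  _ < (1 + sinhp p x ^ p) ^ (1/p) :=
        Real.rpow_lt_rpow hvp (by linarith) (by positivity)

lemma tanp_rpow_p (hp : 1 < p) {x : ℝ} (hx : x ∈ Set.Ioo 0 (arcsinp p 1)) :
    tanp p x ^ p = sinp p x ^ p / (1 - sinp p x ^ p) := by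
  have hs := sinp_mem_Ioo hp hx
  have hsp : sinp p x ^ p < 1 := Real.rpow_lt_one hs.1.le hs.2 (by linarith)
  have hc : (0:ℝ) < 1 - sinp p x ^ p := by linarith
  rw [tanp, cosp, Real.div_rpow hs.1.le (Real.rpow_nonneg hc.le _),
    ← Real.rpow_mul hc.le, one_div_mul_cancel (by linarith : p ≠ 0), Real.rpow_one]

lemma tanhp_rpow_p (hp : 1 < p) {x : ℝ} (hx : 0 ≤ x) :
    tanhp p x ^ p = sinhp p x ^ p / (1 + sinhp p x ^ p) := by
  have hv := (sinhp_spec hp hx).1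
  have hvp : 0 ≤ sinhp p x ^ p := Real.rpow_nonneg hv _
  have hd : (0:ℝ) < 1 + sinhp p x ^ p := by linarith
  rw [tanhp, coshp, Real.div_rpow hv (Real.rpow_nonneg hd.le _),
    ← Real.rpow_mul hd.le, one_div_mul_cancel (by linarith : p ≠ 0), Real.rpow_one]

lemma tanp_hasDerivAt (hp : 1 < p) {x : ℝ} (hx : x ∈ Set.Ioo 0 (arcsinp p 1)) :
    HasDerivAt (tanp p) (1 + tanp p x ^ p) x := by
  have hs := sinp_mem_Ioo hp hx
  set u := sinp p x with hu
  have hsp : u ^ p < 1 := Real.rpow_lt_one hs.1.le hs.2 (by linarith)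
  have hupos : 0 < u ^ p := Real.rpow_pos_of_pos hs.1 _
  have hc : (0:ℝ) < 1 - u ^ p := by linarith
  set A := (1 - u ^ p) ^ (1/p : ℝ) with hA
  have hApos : 0 < A := Real.rpow_pos_of_pos hc _
  have hS : HasDerivAt (sinp p) A x := sinp_hasDerivAt hp hx
  have h1 : HasDerivAt (fun y => sinp p y ^ p) (p * u ^ (p-1) * A) x :=
    by have := hS.rpow_const (Or.inr hp.le); convert this using 1; ring
  have h2 : HasDerivAt (fun y => 1 - sinp p y ^ p) (-(p * u ^ (p-1) * A)) x :=
    h1.const_sub 1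
  have h3 : HasDerivAt (fun y => (1 - sinp p y ^ p) ^ (1/p : ℝ))
      ((1/p) * (1 - u ^ p) ^ (1/p - 1 : ℝ) * -(p * u ^ (p-1) * A)) x := by
    have := h2.rpow_const (p := (1/p : ℝ)) (Or.inl hc.ne'); convert this using 1; ring
  have h4 := hS.div h3 (by positivity : (1 - u ^ p) ^ (1/p : ℝ) ≠ 0)
  have he1 : (1 - u ^ p) ^ (1/p - 1 : ℝ) = A / (1 - u ^ p) := by
    rw [Real.rpow_sub hc, Real.rpow_one]
  have he2 : u ^ (-1 + p : ℝ) * u = u ^ p := by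
    rw [← Real.rpow_add_one hs.1.ne']
    norm_num
  have hT : tanp p x ^ p = u ^ p / (1 - u ^ p) := tanp_rpow_p hp hx
  have key : (A * (1 - u ^ p) ^ (1/p : ℝ) - u * ((1/p) * (1 - u ^ p) ^ (1/p - 1 : ℝ)
      * -(p * u ^ (p-1) * A))) / ((1 - u ^ p) ^ (1/p : ℝ)) ^ 2 = 1 + tanp p x ^ p := by
    rw [hT, he1, ← hA]
    field_simp
    ring_nf
    linear_combination he2
  have : HasDerivAt (fun y => sinp p y / (1 - sinp p y ^ p) ^ (1/p : ℝ))
      (1 + tanp p x ^ p) x := key ▸ h4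
  exact this

lemma tanhp_hasDerivAt (hp : 1 < p) {x : ℝ} (hx : 0 < x) :
    HasDerivAt (tanhp p) (1 - tanhp p x ^ p) x := by
  have hv := sinhp_pos hp hx
  set v := sinhp p x with hvdef
  have hvp : 0 < v ^ p := Real.rpow_pos_of_pos hv _
  have hd : (0:ℝ) < 1 + v ^ p := by linarith
  set A := (1 + v ^ p) ^ (1/p : ℝ) with hA
  have hApos : 0 < A := Real.rpow_pos_of_pos hd _
  have hS : HasDerivAt (sinhp p) A x := sinhp_hasDerivAt hp hx
  have h1 : HasDerivAt (fun y => sinhp p y ^ p) (p * v ^ (p-1) * A) x :=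
    by have := hS.rpow_const (Or.inr hp.le); convert this using 1; ring
  have h2 : HasDerivAt (fun y => 1 + sinhp p y ^ p) (p * v ^ (p-1) * A) x :=
    h1.const_add 1
  have h3 : HasDerivAt (fun y => (1 + sinhp p y ^ p) ^ (1/p : ℝ))
      ((1/p) * (1 + v ^ p) ^ (1/p - 1 : ℝ) * (p * v ^ (p-1) * A)) x := by
    have := h2.rpow_const (p := (1/p : ℝ)) (Or.inl hd.ne'); convert this using 1; ring
  have h4 := hS.div h3 (by positivity : (1 + v ^ p) ^ (1/p : ℝ) ≠ 0)
  have he1 : (1 + v ^ p) ^ (1/p - 1 : ℝ) = A / (1 + v ^ p) := by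
    rw [Real.rpow_sub hd, Real.rpow_one]
  have he2 : v ^ (-1 + p : ℝ) * v = v ^ p := by
    rw [← Real.rpow_add_one hv.ne']
    norm_num
  have hT : tanhp p x ^ p = v ^ p / (1 + v ^ p) := tanhp_rpow_p hp hx.le
  have key : (A * (1 + v ^ p) ^ (1/p : ℝ) - v * ((1/p) * (1 + v ^ p) ^ (1/p - 1 : ℝ)
      * (p * v ^ (p-1) * A))) / ((1 + v ^ p) ^ (1/p : ℝ)) ^ 2 = 1 - tanhp p x ^ p := by
    rw [hT, he1, ← hA]
    field_simp
    ring_nf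
    linear_combination (-1) * he2
  have : HasDerivAt (fun y => sinhp p y / (1 + sinhp p y ^ p) ^ (1/p : ℝ))
      (1 - tanhp p x ^ p) x := key ▸ h4
  exact this

end PT
end Aux6
section Aux7
open MeasureTheory intervalIntegral

namespace PT

variable {p : ℝ}

lemma pos_of_deriv {F F' : ℝ → ℝ} {b : ℝ} (hb : 0 < b)
    (hF0 : F 0 = 0)
    (hcont : ContinuousOn F (Set.Icc 0 b))
    (hder : ∀ y ∈ Set.Ioo 0 b, HasDerivAt F (F' y) y)
    (hpos : ∀ y ∈ Set.Ioo 0 b, 0 < F' y) : 0 < F b := by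
  have hmono : StrictMonoOn F (Set.Icc 0 b) := by
    apply strictMonoOn_of_hasDerivWithinAt_pos (convex_Icc 0 b) hcont
    · intro y hy
      rw [interior_Icc] at hy
      exact ((hder y hy).hasDerivWithinAt)
    · intro y hy
      rw [interior_Icc] at hy
      exact hpos y hy
  have := hmono ⟨le_rfl, hb.le⟩ ⟨hb.le, le_rfl⟩ hb
  rwa [hF0] at this

lemma tanp_cwa0 (hp : 1 < p) : ContinuousWithinAt (tanp p) (Set.Ici 0) 0 := by
  have hp0 : (0:ℝ) < p := by linarith
  have h1 := sinp_cwa0 hp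
  have h2 : ContinuousWithinAt (fun y => sinp p y ^ p) (Set.Ici 0) 0 :=
    h1.rpow_const (Or.inr hp0.le)
  have h3 : ContinuousWithinAt (fun y => 1 - sinp p y ^ p) (Set.Ici 0) 0 :=
    continuousWithinAt_const.sub h2
  have hbase : (1:ℝ) - sinp p 0 ^ p ≠ 0 := by
    rw [sinp_zero hp, Real.zero_rpow hp0.ne']
    norm_num
  have h4 : ContinuousWithinAt (fun y => (1 - sinp p y ^ p) ^ (1/p : ℝ))
      (Set.Ici 0) 0 := h3.rpow_const (Or.inl hbase)
  have h5 : (fun y => (1 - sinp p y ^ p) ^ (1/p : ℝ)) 0 ≠ 0 := by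
    simp only
    rw [sinp_zero hp, Real.zero_rpow hp0.ne']
    norm_num
  exact h1.div h4 h5

lemma tanhp_cwa0 (hp : 1 < p) : ContinuousWithinAt (tanhp p) (Set.Ici 0) 0 := by
  have hp0 : (0:ℝ) < p := by linarith
  have h1 := sinhp_cwa0 hp
  have h2 : ContinuousWithinAt (fun y => sinhp p y ^ p) (Set.Ici 0) 0 :=
    h1.rpow_const (Or.inr hp0.le)
  have h3 : ContinuousWithinAt (fun y => 1 + sinhp p y ^ p) (Set.Ici 0) 0 :=
    continuousWithinAt_const.add h2
  have hbase : (1:ℝ) + sinhp p 0 ^ p ≠ 0 := by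
    rw [sinhp_zero hp, Real.zero_rpow hp0.ne']
    norm_num
  have h4 : ContinuousWithinAt (fun y => (1 + sinhp p y ^ p) ^ (1/p : ℝ))
      (Set.Ici 0) 0 := h3.rpow_const (Or.inl hbase)
  have h5 : (fun y => (1 + sinhp p y ^ p) ^ (1/p : ℝ)) 0 ≠ 0 := by
    simp only
    rw [sinhp_zero hp, Real.zero_rpow hp0.ne']
    norm_num
  exact h1.div h4 h5

lemma tanhp_lt_tanp (hp : 1 < p) {x : ℝ} (hx : x ∈ Set.Ioo 0 (arcsinp p 1)) :
    tanhp p x < tanp p x := by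
  have hp0 : (0:ℝ) < p := by linarith
  have key : 0 < tanp p x - tanhp p x := by
    apply pos_of_deriv (F' := fun y => (1 + tanp p y ^ p) - (1 - tanhp p y ^ p)) hx.1
    · rw [tanp_zero hp, tanhp_zero hp, sub_zero]
    · intro y hy
      rcases eq_or_lt_of_le hy.1 with h | h
      · subst h
        exact (((tanp_cwa0 hp).sub (tanhp_cwa0 hp)).mono Set.Icc_subset_Ici_self)
      · have hy' : y ∈ Set.Ioo 0 (arcsinp p 1) := ⟨h, lt_of_le_of_lt hy.2 hx.2⟩
        exact (((tanp_hasDerivAt hp hy').sub (tanhp_hasDerivAt hp h)).continuousAt).continuousWithinAt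
    · intro y hy
      have hy' : y ∈ Set.Ioo 0 (arcsinp p 1) := ⟨hy.1, lt_trans hy.2 hx.2⟩
      exact (tanp_hasDerivAt hp hy').sub (tanhp_hasDerivAt hp hy.1)
    · intro y hy
      have hy' : y ∈ Set.Ioo 0 (arcsinp p 1) := ⟨hy.1, lt_trans hy.2 hx.2⟩
      have h1 : 0 < tanp p y ^ p := Real.rpow_pos_of_pos (tanp_pos hp hy') _
      have h2 : 0 < tanhp p y ^ p := Real.rpow_pos_of_pos (tanhp_pos hp hy.1) _
      linarith
  linarith

lemma phi_lemma (hp : 1 < p) {x : ℝ} (hx : x ∈ Set.Ioo 0 (arcsinp p 1)) :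
    tanp p x - tanhp p x <
      tanhp p x * tanp p x ^ p + tanp p x * tanhp p x ^ p := by
  have hp0 : (0:ℝ) < p := by linarith
  set F : ℝ → ℝ := fun y => tanhp p y * tanp p y ^ p + tanp p y * tanhp p y ^ p
    - tanp p y + tanhp p y with hF
  set F' : ℝ → ℝ := fun y => (1 - tanhp p y ^ p) * tanp p y ^ p
    + tanhp p y * ((1 + tanp p y ^ p) * p * tanp p y ^ (p - 1))
    + ((1 + tanp p y ^ p) * tanhp p y ^ p
    + tanp p y * ((1 - tanhp p y ^ p) * p * tanhp p y ^ (p - 1)))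
    - (1 + tanp p y ^ p) + (1 - tanhp p y ^ p) with hF'
  have key : 0 < F x := by
    apply pos_of_deriv (F' := F') hx.1
    · rw [hF]
      simp only
      rw [tanp_zero hp, tanhp_zero hp, Real.zero_rpow hp0.ne']
      ring
    · -- continuity on Icc 0 x
      intro y hy
      rcases eq_or_lt_of_le hy.1 with h | h
      · have hcw : ContinuousWithinAt F (Set.Ici 0) 0 := by
          have hT := tanp_cwa0 hp
          have hH := tanhp_cwa0 hp
          have hTp : ContinuousWithinAt (fun y => tanp p y ^ p) (Set.Ici 0) 0 :=
            hT.rpow_const (Or.inr hp0.le)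
          have hHp : ContinuousWithinAt (fun y => tanhp p y ^ p) (Set.Ici 0) 0 :=
            hH.rpow_const (Or.inr hp0.le)
          exact (((hH.mul hTp).add (hT.mul hHp)).sub hT).add hH
        subst h
        exact hcw.mono Set.Icc_subset_Ici_self
      · have hy' : y ∈ Set.Ioo 0 (arcsinp p 1) := ⟨h, lt_of_le_of_lt hy.2 hx.2⟩
        have hT := tanp_hasDerivAt hp hy'
        have hH := tanhp_hasDerivAt hp h
        have hTp := hT.rpow_const (p := p) (Or.inr hp.le)
        have hHp := hH.rpow_const (p := p) (Or.inr hp.le)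
        exact ((((hH.mul hTp).add (hT.mul hHp)).sub hT).add hH).continuousAt.continuousWithinAt
    · intro y hy
      have hy' : y ∈ Set.Ioo 0 (arcsinp p 1) := ⟨hy.1, lt_trans hy.2 hx.2⟩
      have hT := tanp_hasDerivAt hp hy'
      have hH := tanhp_hasDerivAt hp hy.1
      have hTp := hT.rpow_const (p := p) (Or.inr hp.le)
      have hHp := hH.rpow_const (p := p) (Or.inr hp.le)
      have h0 := (((hH.mul hTp).add (hT.mul hHp)).sub hT).add hH
      exact h0
    · intro y hy
      have hy' : y ∈ Set.Ioo 0 (arcsinp p 1) := ⟨hy.1, lt_trans hy.2 hx.2⟩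
      set T := tanp p y
      set H := tanhp p y
      have hT0 : 0 < T := tanp_pos hp hy'
      have hH0 : 0 < H := tanhp_pos hp hy.1
      have hH1 : H < 1 := tanhp_lt_one hp hy.1.le
      have hHp1 : H ^ p < 1 := Real.rpow_lt_one hH0.le hH1 hp0
      have hTpow : (0:ℝ) < T ^ p := Real.rpow_pos_of_pos hT0 _
      have hTpow1 : (0:ℝ) < T ^ (p - 1) := Real.rpow_pos_of_pos hT0 _
      have hHpow : (0:ℝ) < H ^ p := Real.rpow_pos_of_pos hH0 _
      have hHpow1 : (0:ℝ) < H ^ (p - 1) := Real.rpow_pos_of_pos hH0 _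
      have heq : F' y = H * ((1 + T ^ p) * p * T ^ (p - 1))
          + T * ((1 - H ^ p) * p * H ^ (p - 1)) := by
        rw [hF']
        ring
      rw [heq]
      have t1 : 0 < H * ((1 + T ^ p) * p * T ^ (p - 1)) := by positivity
      have t2 : 0 < T * ((1 - H ^ p) * p * H ^ (p - 1)) := by
        apply mul_pos hT0
        apply mul_pos (mul_pos (by linarith) hp0) hHpow1
      linarith
  rw [hF] at key
  simp only at key
  linarith

end PT
end Aux7
section Aux8
open MeasureTheory intervalIntegral

namespace PT

variable {p : ℝ}

lemma key_ineq (hp : 2 < p) {T H : ℝ} (hH0 : 0 < H) (hH1 : H < 1) (hHT : H < T)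
    (hphi : T - H < H * T ^ p + T * H ^ p) :
    H ^ (p - 3) * (1 - H ^ p) < T ^ (p - 3) * (1 + T ^ p) := by
  have hp0 : (0:ℝ) < p := by linarith
  have hT0 : 0 < T := lt_trans hH0 hHT
  have hHp : H ^ p < 1 := Real.rpow_lt_one hH0.le hH1 hp0
  have hTp : 0 < T ^ p := Real.rpow_pos_of_pos hT0 _
  have hHpp : 0 < H ^ p := Real.rpow_pos_of_pos hH0 _
  rcases le_or_gt 3 p with h3 | h3
  · have h1 : H ^ (p-3) ≤ T ^ (p-3) := Real.rpow_le_rpow hH0.le hHT.le (by linarith)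
    have hTq : 0 < T ^ (p-3) := Real.rpow_pos_of_pos hT0 _
    calc H ^ (p-3) * (1 - H ^ p) ≤ T ^ (p-3) * (1 - H ^ p) :=
          mul_le_mul_of_nonneg_right h1 (by linarith)
    _ < T ^ (p-3) * (1 + T ^ p) := by
          apply mul_lt_mul_of_pos_left (by linarith) hTq
  · set e := 3 - p with he
    have he0 : 0 < e := by rw [he]; linarith
    have he1 : e < 1 := by rw [he]; linarith
    have hTe : 0 < T ^ e := Real.rpow_pos_of_pos hT0 _
    have hHe : 0 < H ^ e := Real.rpow_pos_of_pos hH0 _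
    have hA : T * (1 - H ^ p) < H * (1 + T ^ p) := by nlinarith [hphi]
    have hB : H * T ^ e < H ^ e * T := by
      have h1 : H / T < (H / T) ^ e := by
        have := Real.rpow_lt_rpow_of_exponent_gt (div_pos hH0 hT0)
          ((div_lt_one hT0).mpr hHT) he1
        rwa [Real.rpow_one] at this
      rw [Real.div_rpow hH0.le hT0.le, div_lt_div_iff₀ hT0 hTe] at h1
      linarith
    have hC : T ^ e * (1 - H ^ p) < H ^ e * (1 + T ^ p) := by
      have s1 := mul_lt_mul_of_pos_left hA hTe
      have s2 := mul_lt_mul_of_pos_right hB (show (0:ℝ) < 1 + T ^ p by linarith)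
      have s3 : T * (T ^ e * (1 - H ^ p)) < T * (H ^ e * (1 + T ^ p)) := by nlinarith
      exact lt_of_mul_lt_mul_left s3 hT0.le
    have hHinv : H ^ (p - 3) = (H ^ e)⁻¹ := by
      rw [show p - 3 = -e by rw [he]; ring, Real.rpow_neg hH0.le]
    have hTinv : T ^ (p - 3) = (T ^ e)⁻¹ := by
      rw [show p - 3 = -e by rw [he]; ring, Real.rpow_neg hT0.le]
    rw [hHinv, hTinv, inv_mul_eq_div, inv_mul_eq_div, div_lt_div_iff₀ hHe hTe]
    nlinarith [hC]

end PT
end Aux8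
theorem stmt0 (p : ℝ) (hp : 2 < p) :
    StrictMonoOn (fun x => tanp p x ^ (p - 2) - tanhp p x ^ (p - 2))
      (Set.Ioo 0 (pip p / 2)) := by
  have hp1 : 1 < p := by linarith
  have hp0 : (0:ℝ) < p := by linarith
  rw [PT.pip_half p]
  set F' : ℝ → ℝ := fun x =>
    (1 + tanp p x ^ p) * (p - 2) * tanp p x ^ (p - 2 - 1)
    - (1 - tanhp p x ^ p) * (p - 2) * tanhp p x ^ (p - 2 - 1) with hF'
  have hder : ∀ x ∈ Set.Ioo 0 (arcsinp p 1),
      HasDerivAt (fun x => tanp p x ^ (p - 2) - tanhp p x ^ (p - 2)) (F' x) x := by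
    intro x hx
    have hT := PT.tanp_hasDerivAt hp1 hx
    have hH := PT.tanhp_hasDerivAt hp1 hx.1
    have hT2 := hT.rpow_const (p := p - 2) (Or.inl (PT.tanp_pos hp1 hx).ne')
    have hH2 := hH.rpow_const (p := p - 2) (Or.inl (PT.tanhp_pos hp1 hx.1).ne')
    exact hT2.sub hH2
  have hpos : ∀ x ∈ Set.Ioo 0 (arcsinp p 1), 0 < F' x := by
    intro x hx
    set T := tanp p x
    set H := tanhp p x
    have hT0 : 0 < T := PT.tanp_pos hp1 hx
    have hH0 : 0 < H := PT.tanhp_pos hp1 hx.1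
    have hH1 : H < 1 := PT.tanhp_lt_one hp1 hx.1.le
    have hHT : H < T := PT.tanhp_lt_tanp hp1 hx
    have hphi : T - H < H * T ^ p + T * H ^ p := by
      have := PT.phi_lemma hp1 hx
      linarith
    have hkey := PT.key_ineq hp hH0 hH1 hHT hphi
    have he : p - 2 - 1 = p - 3 := by ring
    rw [hF']
    simp only
    rw [he]
    nlinarith [hkey]
  apply strictMonoOn_of_hasDerivWithinAt_pos (convex_Ioo _ _)
  · intro x hx
    exact ((hder x hx).continuousAt).continuousWithinAt
  · intro x hx
    rw [interior_Ioo] at hx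
    exact (hder x hx).hasDerivWithinAt
  · intro x hx
    rw [interior_Ioo] at hx
    exact hpos x hx
end

section
/- Let p > 1. Then the function f(x) = cos_p(x)·cosh_p(x) is strictly decreasing on (0, π_p/2), with f(x) → 1 as x → 0⁺ and f(x) → 0 as x → (π_p/2)⁻. In particular, for all x ∈ (0, π_p/2), cos_p(x) < 1/cosh_p(x). -/
open Real Set Filter Topology

open MeasureTheory intervalIntegral
namespace PAux

variable {p : ℝ}

lemma pp (hp : 1 < p) : 0 < p := lt_trans one_pos hp
lemma hq1 (hp : 1 < p) : (-1 : ℝ) < -1 / p := by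
  have := pp hp
  rw [neg_div, neg_lt_neg_iff]
  rw [div_lt_one this]; exact hp

/-- inner map continuity -/
lemma cont_tp (hp : 1 < p) : Continuous (fun t : ℝ => t ^ p) := by
  apply continuous_iff_continuousAt.2
  intro t
  exact Real.continuousAt_rpow_const t p (Or.inr (pp hp).le)

lemma gS_contAt (hp : 1 < p) {t : ℝ} (ht : t ^ p ≠ 1) :
    ContinuousAt (fun t : ℝ => (1 - t ^ p) ^ (-1 / p)) t := by
  have h1 : ContinuousAt (fun t : ℝ => 1 - t ^ p) t :=
    continuousAt_const.sub (cont_tp hp).continuousAt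
  have h2 : ContinuousAt (fun y : ℝ => y ^ (-1 / p)) (1 - t ^ p) :=
    Real.continuousAt_rpow_const _ _ (Or.inl (sub_ne_zero.mpr (Ne.symm ht)))
  exact ContinuousAt.comp (f := fun t : ℝ => 1 - t ^ p) h2 h1

lemma tp_lt_one (hp : 1 < p) {t : ℝ} (h0 : 0 ≤ t) (h1 : t < 1) : t ^ p < 1 :=
  Real.rpow_lt_one h0 h1 (pp hp)

lemma gS_pos (hp : 1 < p) {t : ℝ} (h0 : 0 ≤ t) (h1 : t < 1) :
    0 < (1 - t ^ p) ^ (-1 / p) :=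
  Real.rpow_pos_of_pos (by linarith [tp_lt_one hp h0 h1]) _

lemma gS_contOn (hp : 1 < p) : ContinuousOn (fun t : ℝ => (1 - t ^ p) ^ (-1 / p)) (Ico 0 1) :=
  fun t ht => (gS_contAt hp (ne_of_lt (tp_lt_one hp ht.1 ht.2))).continuousWithinAt

/-- integrability of the arcsinp integrand on [0,1] -/
lemma gS_intble (hp : 1 < p) {x : ℝ} (hx0 : 0 ≤ x) (hx1 : x ≤ 1) :
    IntervalIntegrable (fun t : ℝ => (1 - t ^ p) ^ (-1 / p)) volume 0 x := by
  have key : IntervalIntegrable (fun t : ℝ => (1 - t ^ p) ^ (-1 / p)) volume 0 1 := by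
    have hD : IntervalIntegrable (fun t : ℝ => (1 - t) ^ (-1 / p)) volume 0 1 := by
      have := (intervalIntegrable_rpow' (a := 0) (b := 1) (hq1 hp)).comp_sub_left 1
      simpa using this.symm
    apply hD.mono_fun'
    · have : ContinuousOn (fun t : ℝ => (1 - t ^ p) ^ (-1 / p)) (Ioo 0 1) :=
        (gS_contOn hp).mono (fun t ht => ⟨ht.1.le, ht.2⟩)
      have h1 : volume.restrict (Set.uIoc (0:ℝ) 1) = volume.restrict (Ioo (0:ℝ) 1) := by
        rw [uIoc_of_le (by norm_num : (0:ℝ) ≤ 1)]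
        exact (Measure.restrict_congr_set Ioo_ae_eq_Ioc).symm
      rw [h1]
      exact this.aestronglyMeasurable measurableSet_Ioo
    · rw [uIoc_of_le (by norm_num : (0:ℝ) ≤ 1)]
      filter_upwards [ae_restrict_mem measurableSet_Ioc] with t ht
      rcases eq_or_lt_of_le ht.2 with rfl | ht2
      · have hq : -1/p ≠ 0 := div_ne_zero (by norm_num) (pp hp).ne'
        simp [Real.one_rpow, Real.zero_rpow hq]
      · have htp : t ^ p ≤ t := by
          calc t ^ p ≤ t ^ (1:ℝ) :=
                Real.rpow_le_rpow_of_exponent_ge ht.1 ht2.le hp.le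
            _ = t := Real.rpow_one t
        have h1t : (0:ℝ) < 1 - t := by linarith
        have hb : (1 - t ^ p) ^ (-1/p) ≤ (1 - t) ^ (-1/p) :=
          Real.rpow_le_rpow_of_nonpos h1t (by linarith)
            (by rw [neg_div]; exact neg_nonpos.mpr (by positivity))
        have hpos : 0 ≤ (1 - t ^ p) ^ (-1/p) := Real.rpow_nonneg (by
          have := tp_lt_one hp ht.1.le ht2
          linarith) _
        rw [Real.norm_of_nonneg hpos]
        exact hb
  apply key.mono_set
  rw [uIcc_of_le hx0, uIcc_of_le (by norm_num : (0:ℝ) ≤ 1)]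
  exact Icc_subset_Icc le_rfl hx1

lemma arcsinp_zero : arcsinp p 0 = 0 := integral_same

lemma arcsinp_strictMonoOn (hp : 1 < p) : StrictMonoOn (arcsinp p) (Icc 0 1) := by
  intro x hx y hy hxy
  have hint : ∀ z ∈ Icc (0:ℝ) 1, IntervalIntegrable (fun t : ℝ => (1 - t ^ p) ^ (-1 / p)) volume 0 z :=
    fun z hz => gS_intble hp hz.1 hz.2
  have hxy_int : IntervalIntegrable (fun t : ℝ => (1 - t ^ p) ^ (-1 / p)) volume x y :=
    ((hint y hy).symm.trans (hint x hx)).symm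
  have key : (0:ℝ) < ∫ t in x..y, (1 - t ^ p) ^ (-1 / p) := by
    apply intervalIntegral_pos_of_pos_on hxy_int _ hxy
    intro t ht
    exact gS_pos hp (le_trans hx.1 ht.1.le) (lt_of_lt_of_le ht.2 hy.2)
  have hsplit : arcsinp p y = arcsinp p x + ∫ t in x..y, (1 - t ^ p) ^ (-1 / p) := by
    rw [arcsinp, arcsinp, integral_add_adjacent_intervals (hint x hx) hxy_int]
  rw [hsplit]; linarith

lemma arcsinp_continuousOn (hp : 1 < p) : ContinuousOn (arcsinp p) (Icc 0 1) := by
  have h := intervalIntegral.continuousOn_primitive_interval' (μ := volume)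
    (gS_intble hp zero_le_one le_rfl) (left_mem_uIcc (a := (0:ℝ)) (b := 1))
  rw [uIcc_of_le (by norm_num : (0:ℝ) ≤ 1)] at h
  exact h

end PAux

namespace PAux

variable {p : ℝ}

lemma qneg (hp : 1 < p) : -1 / p < 0 := div_neg_of_neg_of_pos (by norm_num) (pp hp)

lemma pip2_eq : pip p / 2 = arcsinp p 1 := by rw [pip]; ring

lemma pip2_pos (hp : 1 < p) : 0 < pip p / 2 := by
  have := arcsinp_strictMonoOn hp (left_mem_Icc.2 zero_le_one) (right_mem_Icc.2 zero_le_one)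
    one_pos
  rw [arcsinp_zero] at this
  rw [pip2_eq]
  linarith

lemma sinp_spec (hp : 1 < p) {x : ℝ} (hx : x ∈ Icc 0 (pip p / 2)) :
    sinp p x ∈ Icc (0:ℝ) 1 ∧ arcsinp p (sinp p x) = x := by
  have hsurj : x ∈ arcsinp p '' (Icc 0 1) := by
    apply intermediate_value_Icc zero_le_one (arcsinp_continuousOn hp)
    rw [arcsinp_zero, ← pip2_eq]; exact hx
  obtain ⟨a, ha, hax⟩ := hsurj
  exact ⟨Function.invFunOn_mem ⟨a, ha, hax⟩, Function.invFunOn_eq ⟨a, ha, hax⟩⟩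

lemma sinp_arcsinp (hp : 1 < p) {t : ℝ} (ht : t ∈ Icc (0:ℝ) 1) : sinp p (arcsinp p t) = t :=
  (arcsinp_strictMonoOn hp).injOn (Function.invFunOn_apply_mem ht) ht
    (Function.invFunOn_apply_eq ht)

lemma sinp_zero (hp : 1 < p) : sinp p 0 = 0 := by
  have := sinp_arcsinp hp (left_mem_Icc.2 zero_le_one); rwa [arcsinp_zero] at this

lemma sinp_pip2 (hp : 1 < p) : sinp p (pip p / 2) = 1 := by
  rw [pip2_eq]; exact sinp_arcsinp hp (right_mem_Icc.2 zero_le_one)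

lemma sinp_strictMonoOn (hp : 1 < p) : StrictMonoOn (sinp p) (Icc 0 (pip p / 2)) := by
  intro x hx y hy hxy
  obtain ⟨hxI, hxe⟩ := sinp_spec hp hx
  obtain ⟨hyI, hye⟩ := sinp_spec hp hy
  by_contra h
  push_neg at h
  have := (arcsinp_strictMonoOn hp).monotoneOn hyI hxI h
  rw [hxe, hye] at this; linarith

lemma sinp_mem_Ioo (hp : 1 < p) {x : ℝ} (hx : x ∈ Ioo 0 (pip p / 2)) :
    sinp p x ∈ Ioo (0:ℝ) 1 := by
  have h2 := pip2_pos hp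
  have hxm : x ∈ Icc 0 (pip p / 2) := Ioo_subset_Icc_self hx
  constructor
  · have := sinp_strictMonoOn hp (left_mem_Icc.2 h2.le) hxm hx.1
    rwa [sinp_zero hp] at this
  · have := sinp_strictMonoOn hp hxm (right_mem_Icc.2 h2.le) hx.2
    rwa [sinp_pip2 hp] at this

lemma arcsinp_mem_Ioo (hp : 1 < p) {s : ℝ} (hs : s ∈ Ioo (0:ℝ) 1) :
    arcsinp p s ∈ Ioo 0 (pip p / 2) := by
  have h1 := arcsinp_strictMonoOn hp (left_mem_Icc.2 zero_le_one)
    ⟨hs.1.le, hs.2.le⟩ hs.1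
  have h2 := arcsinp_strictMonoOn hp ⟨hs.1.le, hs.2.le⟩ (right_mem_Icc.2 zero_le_one) hs.2
  rw [arcsinp_zero] at h1
  rw [← pip2_eq] at h2
  exact ⟨h1, h2⟩

lemma sinp_image (hp : 1 < p) : sinp p '' (Ioo 0 (pip p / 2)) = Ioo (0:ℝ) 1 := by
  apply subset_antisymm
  · rintro _ ⟨x, hx, rfl⟩; exact sinp_mem_Ioo hp hx
  · rintro s hs
    exact ⟨arcsinp p s, arcsinp_mem_Ioo hp hs, sinp_arcsinp hp ⟨hs.1.le, hs.2.le⟩⟩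

lemma sinp_contAt (hp : 1 < p) {x : ℝ} (hx : x ∈ Ioo 0 (pip p / 2)) :
    ContinuousAt (sinp p) x := by
  apply continuousAt_of_monotoneOn_of_image_mem_nhds
    (((sinp_strictMonoOn hp).monotoneOn).mono Ioo_subset_Icc_self)
    (isOpen_Ioo.mem_nhds hx)
  rw [sinp_image hp]
  exact isOpen_Ioo.mem_nhds (sinp_mem_Ioo hp hx)

lemma arcsinp_hasDerivAt (hp : 1 < p) {t : ℝ} (ht : t ∈ Ioo (0:ℝ) 1) :
    HasDerivAt (arcsinp p) ((1 - t ^ p) ^ (-1 / p)) t := by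
  apply intervalIntegral.integral_hasDerivAt_right (gS_intble hp ht.1.le ht.2.le)
  · exact ContinuousAt.stronglyMeasurableAtFilter isOpen_Ioo
      (fun s hs => gS_contAt hp (ne_of_lt (tp_lt_one hp hs.1.le hs.2))) t ht
  · exact gS_contAt hp (ne_of_lt (tp_lt_one hp ht.1.le ht.2))

lemma sinp_hasDerivAt (hp : 1 < p) {x : ℝ} (hx : x ∈ Ioo 0 (pip p / 2)) :
    HasDerivAt (sinp p) ((1 - (sinp p x) ^ p) ^ (1 / p)) x := by
  have hs : sinp p x ∈ Ioo (0:ℝ) 1 := sinp_mem_Ioo hp hx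
  have hd := arcsinp_hasDerivAt hp hs
  have hne : (1 - (sinp p x) ^ p) ^ (-1 / p) ≠ 0 := (gS_pos hp hs.1.le hs.2).ne'
  have hev : ∀ᶠ y in 𝓝 x, arcsinp p (sinp p y) = y := by
    filter_upwards [isOpen_Ioo.mem_nhds hx] with y hy
    exact (sinp_spec hp (Ioo_subset_Icc_self hy)).2
  have hinv := HasDerivAt.of_local_left_inverse (sinp_contAt hp hx) hd hne hev
  have hbase : (0:ℝ) ≤ 1 - (sinp p x) ^ p := by
    have := tp_lt_one hp hs.1.le hs.2; linarith
  have : ((1 - (sinp p x) ^ p) ^ (-1 / p))⁻¹ = (1 - (sinp p x) ^ p) ^ (1 / p) := by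
    rw [show (-1 / p) = -(1/p) by ring, Real.rpow_neg hbase, inv_inv]
  rwa [this] at hinv

lemma arcsinp_lt_tanp (hp : 1 < p) {s : ℝ} (hs : s ∈ Ioo (0:ℝ) 1) :
    arcsinp p s < s * (1 - s ^ p) ^ (-1 / p) := by
  have hsp : s ^ p < 1 := tp_lt_one hp hs.1.le hs.2
  have hbase : (0:ℝ) < 1 - s ^ p := by linarith
  have key : (∫ t in (0:ℝ)..s, (1 - t ^ p) ^ (-1 / p)) <
      ∫ _ in (0:ℝ)..s, (1 - s ^ p) ^ (-1 / p) := by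
    apply intervalIntegral.integral_lt_integral_of_continuousOn_of_le_of_exists_lt hs.1
    · exact (gS_contOn hp).mono (fun t ht => ⟨ht.1, lt_of_le_of_lt ht.2 hs.2⟩)
    · exact continuousOn_const
    · intro t ht
      have htp : t ^ p ≤ s ^ p := Real.rpow_le_rpow ht.1.le ht.2 (pp hp).le
      exact Real.rpow_le_rpow_of_nonpos hbase (by linarith) (qneg hp).le
    · refine ⟨0, ⟨le_rfl, hs.1.le⟩, ?_⟩
      have h0 : (0:ℝ) ^ p = 0 := Real.zero_rpow (pp hp).ne'
      rw [h0, sub_zero, Real.one_rpow]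
      rw [Real.one_lt_rpow_iff_of_pos hbase]
      have hsp0 : 0 < s ^ p := Real.rpow_pos_of_pos hs.1 p
      exact Or.inr ⟨by linarith, qneg hp⟩
  rw [intervalIntegral.integral_const, smul_eq_mul, sub_zero] at key
  exact key

end PAux

namespace PAux

variable {p : ℝ}

lemma gH_base_pos (hp : 1 < p) {t : ℝ} (ht : 0 ≤ t) : (0:ℝ) < 1 + t ^ p := by
  have : (0:ℝ) ≤ t ^ p := Real.rpow_nonneg ht p
  linarith

lemma gH_pos (hp : 1 < p) {t : ℝ} (ht : 0 ≤ t) : (0:ℝ) < (1 + t ^ p) ^ (-1 / p) :=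
  Real.rpow_pos_of_pos (gH_base_pos hp ht) _

lemma gH_contAt (hp : 1 < p) {t : ℝ} (ht : 0 ≤ t) :
    ContinuousAt (fun t : ℝ => (1 + t ^ p) ^ (-1 / p)) t := by
  have h1 : ContinuousAt (fun t : ℝ => 1 + t ^ p) t :=
    continuousAt_const.add (cont_tp hp).continuousAt
  have h2 : ContinuousAt (fun y : ℝ => y ^ (-1 / p)) (1 + t ^ p) :=
    Real.continuousAt_rpow_const _ _ (Or.inl (gH_base_pos hp ht).ne')
  exact ContinuousAt.comp (f := fun t : ℝ => 1 + t ^ p) h2 h1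

lemma gH_contOn (hp : 1 < p) : ContinuousOn (fun t : ℝ => (1 + t ^ p) ^ (-1 / p)) (Ici 0) :=
  fun t ht => (gH_contAt hp ht).continuousWithinAt

lemma gH_intble (hp : 1 < p) {x y : ℝ} (hx : 0 ≤ x) (hy : 0 ≤ y) :
    IntervalIntegrable (fun t : ℝ => (1 + t ^ p) ^ (-1 / p)) volume x y := by
  apply ContinuousOn.intervalIntegrable
  apply (gH_contOn hp).mono
  intro t ht
  rcases le_total x y with h | h
  · rw [uIcc_of_le h] at ht; exact le_trans hx ht.1
  · rw [uIcc_of_ge h] at ht; exact le_trans hy ht.1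

lemma arsinhp_zero : arsinhp p 0 = 0 := integral_same

lemma arsinhp_strictMonoOn (hp : 1 < p) : StrictMonoOn (arsinhp p) (Ici 0) := by
  intro x hx y hy hxy
  have hxy_int' : IntervalIntegrable (fun t : ℝ => (1 + t ^ p) ^ (-1 / p)) volume x y :=
    gH_intble hp (mem_Ici.1 hx) (mem_Ici.1 hy)
  have key : (0:ℝ) < ∫ t in x..y, (1 + t ^ p) ^ (-1 / p) := by
    apply intervalIntegral_pos_of_pos_on hxy_int' _ hxy
    intro t ht
    exact gH_pos hp (le_trans (mem_Ici.1 hx) ht.1.le)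
  have hsplit : arsinhp p y = arsinhp p x + ∫ t in x..y, (1 + t ^ p) ^ (-1 / p) := by
    rw [arsinhp, arsinhp,
      integral_add_adjacent_intervals (gH_intble hp le_rfl (mem_Ici.1 hx)) hxy_int']
  rw [hsplit]; linarith

lemma arsinhp_contOn (hp : 1 < p) {M : ℝ} (hM : 0 ≤ M) :
    ContinuousOn (arsinhp p) (Icc 0 M) := by
  have h := intervalIntegral.continuousOn_primitive_interval' (μ := volume)
    (gH_intble hp le_rfl hM) (left_mem_uIcc (a := (0:ℝ)) (b := M))
  rw [uIcc_of_le hM] at h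
  exact h

lemma arsinhp_large (hp : 1 < p) {c : ℝ} (hc : 0 ≤ c) :
    ∃ M : ℝ, 0 ≤ M ∧ c ≤ arsinhp p M := by
  have hb_pos : 0 < (2:ℝ) ^ (1 / p) := Real.rpow_pos_of_pos (by norm_num) _
  set M : ℝ := Real.exp (c * (2:ℝ) ^ (1 / p)) with hMdef
  have hM1 : (1:ℝ) ≤ M := Real.one_le_exp (by positivity)
  have hM0 : (0:ℝ) ≤ M := by linarith
  refine ⟨M, hM0, ?_⟩
  have hsplit : arsinhp p M = (∫ t in (0:ℝ)..1, (1 + t ^ p) ^ (-1 / p)) +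
      ∫ t in (1:ℝ)..M, (1 + t ^ p) ^ (-1 / p) := by
    rw [arsinhp, ← integral_add_adjacent_intervals (gH_intble hp le_rfl zero_le_one)
      (gH_intble hp zero_le_one hM0)]
  have h1 : (0:ℝ) ≤ ∫ t in (0:ℝ)..1, (1 + t ^ p) ^ (-1 / p) := by
    apply intervalIntegral.integral_nonneg zero_le_one
    intro t ht
    exact (gH_pos hp ht.1).le
  have h2 : (∫ t in (1:ℝ)..M, (2:ℝ) ^ (-1 / p) * t⁻¹) ≤
      ∫ t in (1:ℝ)..M, (1 + t ^ p) ^ (-1 / p) := by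
    apply intervalIntegral.integral_mono_on hM1
    · apply ContinuousOn.intervalIntegrable
      apply ContinuousOn.mul continuousOn_const
      apply ContinuousOn.inv₀ continuousOn_id
      intro t ht
      rw [uIcc_of_le hM1] at ht
      exact (lt_of_lt_of_le one_pos ht.1).ne'
    · exact gH_intble hp zero_le_one hM0
    · intro t ht
      have ht1 : (1:ℝ) ≤ t := ht.1
      have htp1 : (1:ℝ) ≤ t ^ p := Real.one_le_rpow ht1 (pp hp).le
      have hle : 1 + t ^ p ≤ 2 * t ^ p := by linarith
      have hcomp : ((2:ℝ) * t ^ p) ^ (-1 / p) ≤ (1 + t ^ p) ^ (-1 / p) :=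
        Real.rpow_le_rpow_of_nonpos (gH_base_pos hp (by linarith)) hle (qneg hp).le
      have heq : ((2:ℝ) * t ^ p) ^ (-1 / p) = (2:ℝ) ^ (-1 / p) * t⁻¹ := by
        rw [Real.mul_rpow (by norm_num) (Real.rpow_nonneg (by linarith) p),
          ← Real.rpow_mul (by linarith : (0:ℝ) ≤ t),
          show p * (-1 / p) = -1 by field_simp, Real.rpow_neg_one]
      rw [← heq]
      exact hcomp
  have h3 : (∫ t in (1:ℝ)..M, (2:ℝ) ^ (-1 / p) * t⁻¹) = c := by
    rw [intervalIntegral.integral_const_mul, integral_inv (by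
      rw [uIcc_of_le hM1]
      intro h
      exact absurd h.1 (by norm_num))]
    rw [div_one, hMdef, Real.log_exp,
      show (2:ℝ) ^ (-1 / p) * (c * (2:ℝ) ^ (1 / p)) = c * ((2:ℝ) ^ (-1 / p) * (2:ℝ) ^ (1 / p))
        by ring,
      ← Real.rpow_add (by norm_num : (0:ℝ) < 2), show -1 / p + 1 / p = 0 by ring,
      Real.rpow_zero, mul_one]
  rw [hsplit]
  linarith

lemma sinhp_spec (hp : 1 < p) {x : ℝ} (hx : 0 ≤ x) :
    0 ≤ sinhp p x ∧ arsinhp p (sinhp p x) = x := by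
  obtain ⟨M, hM0, hMc⟩ := arsinhp_large hp hx
  have hsurj : x ∈ arsinhp p '' (Icc 0 M) := by
    apply intermediate_value_Icc hM0 (arsinhp_contOn hp hM0)
    rw [arsinhp_zero]
    exact ⟨hx, hMc⟩
  obtain ⟨a, ha, hax⟩ := hsurj
  have hmem : ∃ a ∈ Ici (0:ℝ), arsinhp p a = x := ⟨a, ha.1, hax⟩
  exact ⟨Function.invFunOn_mem hmem, Function.invFunOn_eq hmem⟩

end PAux

namespace PAux

variable {p : ℝ}

lemma sinhp_arsinhp (hp : 1 < p) {t : ℝ} (ht : 0 ≤ t) : sinhp p (arsinhp p t) = t :=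
  (arsinhp_strictMonoOn hp).injOn (Function.invFunOn_apply_mem (mem_Ici.2 ht)) (mem_Ici.2 ht)
    (Function.invFunOn_apply_eq (mem_Ici.2 ht))

lemma sinhp_zero (hp : 1 < p) : sinhp p 0 = 0 := by
  have := sinhp_arsinhp hp le_rfl; rwa [arsinhp_zero] at this

lemma sinhp_strictMonoOn (hp : 1 < p) : StrictMonoOn (sinhp p) (Ici 0) := by
  intro x hx y hy hxy
  obtain ⟨hxI, hxe⟩ := sinhp_spec hp (mem_Ici.1 hx)
  obtain ⟨hyI, hye⟩ := sinhp_spec hp (mem_Ici.1 hy)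
  by_contra h
  push_neg at h
  have := (arsinhp_strictMonoOn hp).monotoneOn (mem_Ici.2 hyI) (mem_Ici.2 hxI) h
  rw [hxe, hye] at this; linarith

lemma sinhp_pos (hp : 1 < p) {x : ℝ} (hx : 0 < x) : 0 < sinhp p x := by
  have := sinhp_strictMonoOn hp (self_mem_Ici) (mem_Ici.2 hx.le) hx
  rwa [sinhp_zero hp] at this

lemma arsinhp_pos (hp : 1 < p) {t : ℝ} (ht : 0 < t) : 0 < arsinhp p t := by
  have := arsinhp_strictMonoOn hp self_mem_Ici (mem_Ici.2 ht.le) ht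
  rwa [arsinhp_zero] at this

lemma sinhp_image_Ioi (hp : 1 < p) : sinhp p '' (Ioi 0) = Ioi (0:ℝ) := by
  apply subset_antisymm
  · rintro _ ⟨x, hx, rfl⟩; exact sinhp_pos hp hx
  · rintro t ht
    exact ⟨arsinhp p t, arsinhp_pos hp ht, sinhp_arsinhp hp (le_of_lt ht)⟩

lemma sinhp_contAt (hp : 1 < p) {x : ℝ} (hx : 0 < x) : ContinuousAt (sinhp p) x := by
  apply continuousAt_of_monotoneOn_of_image_mem_nhds
    (((sinhp_strictMonoOn hp).monotoneOn).mono Ioi_subset_Ici_self)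
    (isOpen_Ioi.mem_nhds hx)
  rw [sinhp_image_Ioi hp]
  exact isOpen_Ioi.mem_nhds (sinhp_pos hp hx)

lemma arsinhp_hasDerivAt (hp : 1 < p) {t : ℝ} (ht : 0 < t) :
    HasDerivAt (arsinhp p) ((1 + t ^ p) ^ (-1 / p)) t := by
  apply intervalIntegral.integral_hasDerivAt_right (gH_intble hp le_rfl ht.le)
  · exact ContinuousAt.stronglyMeasurableAtFilter isOpen_Ioi
      (fun s hs => gH_contAt hp (le_of_lt hs)) t ht
  · exact gH_contAt hp ht.le

lemma sinhp_hasDerivAt (hp : 1 < p) {x : ℝ} (hx : 0 < x) :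
    HasDerivAt (sinhp p) ((1 + (sinhp p x) ^ p) ^ (1 / p)) x := by
  have hs : 0 < sinhp p x := sinhp_pos hp hx
  have hd := arsinhp_hasDerivAt hp hs
  have hne : (1 + (sinhp p x) ^ p) ^ (-1 / p) ≠ 0 := (gH_pos hp hs.le).ne'
  have hev : ∀ᶠ y in 𝓝 x, arsinhp p (sinhp p y) = y := by
    filter_upwards [isOpen_Ioi.mem_nhds hx] with y hy
    exact (sinhp_spec hp (le_of_lt hy)).2
  have hinv := HasDerivAt.of_local_left_inverse (sinhp_contAt hp hx) hd hne hev
  have hbase : (0:ℝ) ≤ 1 + (sinhp p x) ^ p := (gH_base_pos hp hs.le).le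
  have : ((1 + (sinhp p x) ^ p) ^ (-1 / p))⁻¹ = (1 + (sinhp p x) ^ p) ^ (1 / p) := by
    rw [show (-1 / p) = -(1/p) by ring, Real.rpow_neg hbase, inv_inv]
  rwa [this] at hinv

lemma tanhp_lt_arsinhp (hp : 1 < p) {h : ℝ} (hh : 0 < h) :
    h * (1 + h ^ p) ^ (-1 / p) < arsinhp p h := by
  have hbase : (0:ℝ) < 1 + h ^ p := gH_base_pos hp hh.le
  have key : (∫ _ in (0:ℝ)..h, (1 + h ^ p) ^ (-1 / p)) <
      ∫ t in (0:ℝ)..h, (1 + t ^ p) ^ (-1 / p) := by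
    apply intervalIntegral.integral_lt_integral_of_continuousOn_of_le_of_exists_lt hh
    · exact continuousOn_const
    · exact (gH_contOn hp).mono (fun t ht => ht.1)
    · intro t ht
      have htp : t ^ p ≤ h ^ p := Real.rpow_le_rpow ht.1.le ht.2 (pp hp).le
      exact Real.rpow_le_rpow_of_nonpos (gH_base_pos hp ht.1.le) (by linarith)
        (qneg hp).le
    · refine ⟨0, ⟨le_rfl, hh.le⟩, ?_⟩
      have h0 : (0:ℝ) ^ p = 0 := Real.zero_rpow (pp hp).ne'
      rw [h0, add_zero, Real.one_rpow]
      apply Real.rpow_lt_one_of_one_lt_of_neg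
      · have : 0 < h ^ p := Real.rpow_pos_of_pos hh p
        linarith
      · exact qneg hp
  rw [intervalIntegral.integral_const, smul_eq_mul, sub_zero] at key
  exact key

end PAux

namespace PAux

variable {p : ℝ}

lemma A_pos (hp : 1 < p) {x : ℝ} (hx : x ∈ Ioo 0 (pip p / 2)) :
    0 < 1 - sinp p x ^ p := by
  have hs := sinp_mem_Ioo hp hx
  have := tp_lt_one hp hs.1.le hs.2; linarith

lemma G_hasDerivAt (hp : 1 < p) {x : ℝ} (hx : x ∈ Ioo 0 (pip p / 2)) :
    HasDerivAt (fun y => (1 - sinp p y ^ p) * (1 + sinhp p y ^ p))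
      (-((1 - sinp p x ^ p) ^ (1/p) * p * sinp p x ^ (p-1)) * (1 + sinhp p x ^ p) +
        (1 - sinp p x ^ p) * ((1 + sinhp p x ^ p) ^ (1/p) * p * sinhp p x ^ (p-1))) x := by
  have hs := sinp_mem_Ioo hp hx
  have h1 : HasDerivAt (fun y => sinp p y ^ p)
      ((1 - sinp p x ^ p) ^ (1/p) * p * sinp p x ^ (p-1)) x :=
    (sinp_hasDerivAt hp hx).rpow_const (Or.inl hs.1.ne')
  have h2 : HasDerivAt (fun y => sinhp p y ^ p)
      ((1 + sinhp p x ^ p) ^ (1/p) * p * sinhp p x ^ (p-1)) x :=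
    (sinhp_hasDerivAt hp hx.1).rpow_const (Or.inl (sinhp_pos hp hx.1).ne')
  exact (h1.const_sub 1).mul (h2.const_add 1)

lemma G_deriv_neg (hp : 1 < p) {x : ℝ} (hx : x ∈ Ioo 0 (pip p / 2)) :
    -((1 - sinp p x ^ p) ^ (1/p) * p * sinp p x ^ (p-1)) * (1 + sinhp p x ^ p) +
      (1 - sinp p x ^ p) * ((1 + sinhp p x ^ p) ^ (1/p) * p * sinhp p x ^ (p-1)) < 0 := by
  set s := sinp p x with hsdef
  set h := sinhp p x with hhdef
  have hs := sinp_mem_Ioo hp hx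
  have hh : 0 < h := sinhp_pos hp hx.1
  have hA : 0 < 1 - s ^ p := A_pos hp hx
  have hB : 0 < 1 + h ^ p := gH_base_pos hp hh.le
  have hx1 : arcsinp p s = x := (sinp_spec hp (Ioo_subset_Icc_self hx)).2
  have hx2 : arsinhp p h = x := (sinhp_spec hp hx.1.le).2
  have base_lt : h * (1 + h ^ p) ^ (-1 / p) < s * (1 - s ^ p) ^ (-1 / p) := by
    have l1 := tanhp_lt_arsinhp hp hh
    have l2 := arcsinp_lt_tanp hp hs
    rw [hx2] at l1; rw [hx1] at l2
    linarith
  have hL0 : 0 ≤ h * (1 + h ^ p) ^ (-1 / p) := (mul_pos hh (gH_pos hp hh.le)).le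
  have hpow := Real.rpow_lt_rpow hL0 base_lt (by linarith : (0:ℝ) < p - 1)
  have hexp1 : (h * (1 + h ^ p) ^ (-1 / p)) ^ (p - 1)
      = h ^ (p-1) * (1 + h ^ p) ^ ((-1/p) * (p-1)) := by
    rw [Real.mul_rpow hh.le (Real.rpow_nonneg hB.le _), ← Real.rpow_mul hB.le]
  have hexp2 : (s * (1 - s ^ p) ^ (-1 / p)) ^ (p - 1)
      = s ^ (p-1) * (1 - s ^ p) ^ ((-1/p) * (p-1)) := by
    rw [Real.mul_rpow hs.1.le (Real.rpow_nonneg hA.le _), ← Real.rpow_mul hA.le]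
  rw [hexp1, hexp2] at hpow
  have hBc : (1 + h ^ p) * (1 + h ^ p) ^ ((-1/p) * (p-1)) = (1 + h ^ p) ^ (1/p) := by
    nth_rewrite 1 [← Real.rpow_one (1 + h ^ p)]
    rw [← Real.rpow_add hB, show 1 + -1/p * (p-1) = 1/p by field_simp; ring]
  have hAc : (1 - s ^ p) * (1 - s ^ p) ^ ((-1/p) * (p-1)) = (1 - s ^ p) ^ (1/p) := by
    nth_rewrite 1 [← Real.rpow_one (1 - s ^ p)]
    rw [← Real.rpow_add hA, show 1 + -1/p * (p-1) = 1/p by field_simp; ring]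
  have final : (1 - s ^ p) * (1 + h ^ p) ^ (1/p) * h ^ (p-1) <
      (1 - s ^ p) ^ (1/p) * s ^ (p-1) * (1 + h ^ p) := by
    calc (1 - s ^ p) * (1 + h ^ p) ^ (1/p) * h ^ (p-1)
        = ((1 - s ^ p) * (1 + h ^ p)) * (h ^ (p-1) * (1 + h ^ p) ^ ((-1/p) * (p-1))) := by
          rw [show (1 - s ^ p) * (1 + h ^ p) * (h ^ (p-1) * (1 + h ^ p) ^ ((-1/p) * (p-1)))
            = (1 - s ^ p) * h ^ (p-1) * ((1 + h ^ p) * (1 + h ^ p) ^ ((-1/p) * (p-1))) by ring,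
            hBc]
          ring
      _ < ((1 - s ^ p) * (1 + h ^ p)) * (s ^ (p-1) * (1 - s ^ p) ^ ((-1/p) * (p-1))) :=
          mul_lt_mul_of_pos_left hpow (mul_pos hA hB)
      _ = (1 - s ^ p) ^ (1/p) * s ^ (p-1) * (1 + h ^ p) := by
          rw [show (1 - s ^ p) * (1 + h ^ p) * (s ^ (p-1) * (1 - s ^ p) ^ ((-1/p) * (p-1)))
            = (1 + h ^ p) * s ^ (p-1) * ((1 - s ^ p) * (1 - s ^ p) ^ ((-1/p) * (p-1))) by ring,
            hAc]
          ring
  nlinarith [mul_lt_mul_of_pos_left final (pp hp)]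

lemma G_strictAntiOn (hp : 1 < p) :
    StrictAntiOn (fun y => (1 - sinp p y ^ p) * (1 + sinhp p y ^ p)) (Ioo 0 (pip p / 2)) := by
  apply strictAntiOn_of_deriv_neg (convex_Ioo _ _)
  · intro x hx
    exact ((G_hasDerivAt hp hx).continuousAt).continuousWithinAt
  · intro x hx
    rw [interior_Ioo] at hx
    rw [(G_hasDerivAt hp hx).deriv]
    exact G_deriv_neg hp hx

end PAux

namespace PAux

variable {p : ℝ}

lemma sinhp_image_Ioo (hp : 1 < p) :
    sinhp p '' (Ioo 0 (pip p / 2)) = Ioo 0 (sinhp p (pip p / 2)) := by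
  have h2 := pip2_pos hp
  have hH0 : 0 ≤ sinhp p (pip p / 2) := (sinhp_spec hp h2.le).1
  have hH : arsinhp p (sinhp p (pip p / 2)) = pip p / 2 := (sinhp_spec hp h2.le).2
  apply subset_antisymm
  · rintro _ ⟨x, hx, rfl⟩
    exact ⟨sinhp_pos hp hx.1,
      sinhp_strictMonoOn hp (mem_Ici.2 hx.1.le) (mem_Ici.2 h2.le) hx.2⟩
  · rintro t ht
    refine ⟨arsinhp p t, ⟨arsinhp_pos hp ht.1, ?_⟩, sinhp_arsinhp hp ht.1.le⟩
    have := arsinhp_strictMonoOn hp (mem_Ici.2 ht.1.le) (mem_Ici.2 hH0) ht.2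
    rwa [hH] at this

lemma tendsto_sinp_zero (hp : 1 < p) : Tendsto (sinp p) (𝓝[>] 0) (𝓝 0) := by
  have hne : (Ioo 0 (pip p / 2)).Nonempty := nonempty_Ioo.2 (pip2_pos hp)
  have hmono : MonotoneOn (sinp p) (Ioo 0 (pip p / 2)) :=
    ((sinp_strictMonoOn hp).monotoneOn).mono Ioo_subset_Icc_self
  have hbdd : BddBelow (sinp p '' Ioo 0 (pip p / 2)) := by
    rw [sinp_image hp]; exact bddBelow_Ioo
  have := MonotoneOn.tendsto_nhdsWithin_Ioo_right hne hmono hbdd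
  rwa [sinp_image hp, csInf_Ioo one_pos] at this

lemma tendsto_sinp_pip2 (hp : 1 < p) : Tendsto (sinp p) (𝓝[<] (pip p / 2)) (𝓝 1) := by
  have hne : (Ioo 0 (pip p / 2)).Nonempty := nonempty_Ioo.2 (pip2_pos hp)
  have hmono : MonotoneOn (sinp p) (Ioo 0 (pip p / 2)) :=
    ((sinp_strictMonoOn hp).monotoneOn).mono Ioo_subset_Icc_self
  have hbdd : BddAbove (sinp p '' Ioo 0 (pip p / 2)) := by
    rw [sinp_image hp]; exact bddAbove_Ioo
  have := MonotoneOn.tendsto_nhdsWithin_Ioo_left hne hmono hbdd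
  rwa [sinp_image hp, csSup_Ioo one_pos] at this

lemma tendsto_sinhp_zero (hp : 1 < p) : Tendsto (sinhp p) (𝓝[>] 0) (𝓝 0) := by
  have hne : (Ioo 0 (pip p / 2)).Nonempty := nonempty_Ioo.2 (pip2_pos hp)
  have hmono : MonotoneOn (sinhp p) (Ioo 0 (pip p / 2)) :=
    ((sinhp_strictMonoOn hp).monotoneOn).mono (fun t ht => mem_Ici.2 ht.1.le)
  have hbdd : BddBelow (sinhp p '' Ioo 0 (pip p / 2)) := by
    rw [sinhp_image_Ioo hp]; exact bddBelow_Ioo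
  have := MonotoneOn.tendsto_nhdsWithin_Ioo_right hne hmono hbdd
  rwa [sinhp_image_Ioo hp, csInf_Ioo (sinhp_pos hp (pip2_pos hp))] at this

lemma tendsto_sinhp_pip2 (hp : 1 < p) :
    Tendsto (sinhp p) (𝓝[<] (pip p / 2)) (𝓝 (sinhp p (pip p / 2))) := by
  have hne : (Ioo 0 (pip p / 2)).Nonempty := nonempty_Ioo.2 (pip2_pos hp)
  have hmono : MonotoneOn (sinhp p) (Ioo 0 (pip p / 2)) :=
    ((sinhp_strictMonoOn hp).monotoneOn).mono (fun t ht => mem_Ici.2 ht.1.le)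
  have hbdd : BddAbove (sinhp p '' Ioo 0 (pip p / 2)) := by
    rw [sinhp_image_Ioo hp]; exact bddAbove_Ioo
  have := MonotoneOn.tendsto_nhdsWithin_Ioo_left hne hmono hbdd
  rwa [sinhp_image_Ioo hp, csSup_Ioo (sinhp_pos hp (pip2_pos hp))] at this

lemma phi_cont (hp : 1 < p) : Continuous (fun y : ℝ => (1 - y ^ p) ^ (1/p)) := by
  apply continuous_iff_continuousAt.2
  intro y
  have h1 : ContinuousAt (fun y : ℝ => 1 - y ^ p) y :=
    continuousAt_const.sub (cont_tp hp).continuousAt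
  have h2 : ContinuousAt (fun z : ℝ => z ^ (1/p)) (1 - y ^ p) :=
    Real.continuousAt_rpow_const _ _ (Or.inr (by positivity))
  exact ContinuousAt.comp (f := fun y : ℝ => 1 - y ^ p) h2 h1

lemma psi_cont (hp : 1 < p) : Continuous (fun y : ℝ => (1 + y ^ p) ^ (1/p)) := by
  apply continuous_iff_continuousAt.2
  intro y
  have h1 : ContinuousAt (fun y : ℝ => 1 + y ^ p) y :=
    continuousAt_const.add (cont_tp hp).continuousAt
  have h2 : ContinuousAt (fun z : ℝ => z ^ (1/p)) (1 + y ^ p) :=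
    Real.continuousAt_rpow_const _ _ (Or.inr (by positivity))
  exact ContinuousAt.comp (f := fun y : ℝ => 1 + y ^ p) h2 h1

lemma tendsto_F_zero (hp : 1 < p) :
    Tendsto (fun x => cosp p x * coshp p x) (𝓝[>] (0:ℝ)) (𝓝 1) := by
  have h1 : Tendsto (fun x => cosp p x) (𝓝[>] (0:ℝ)) (𝓝 1) := by
    have hc := ((phi_cont hp).continuousAt (x := 0)).tendsto.comp (tendsto_sinp_zero hp)
    have hval : (1 - (0:ℝ) ^ p) ^ (1/p) = 1 := by
      rw [Real.zero_rpow (pp hp).ne', sub_zero, Real.one_rpow]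
    rw [hval] at hc
    exact hc
  have h2 : Tendsto (fun x => coshp p x) (𝓝[>] (0:ℝ)) (𝓝 1) := by
    have hc := ((psi_cont hp).continuousAt (x := 0)).tendsto.comp (tendsto_sinhp_zero hp)
    have hval : (1 + (0:ℝ) ^ p) ^ (1/p) = 1 := by
      rw [Real.zero_rpow (pp hp).ne', add_zero, Real.one_rpow]
    rw [hval] at hc
    exact hc
  simpa using h1.mul h2

lemma tendsto_F_pip2 (hp : 1 < p) :
    Tendsto (fun x => cosp p x * coshp p x) (𝓝[<] (pip p / 2)) (𝓝 0) := by
  have h1 : Tendsto (fun x => cosp p x) (𝓝[<] (pip p / 2)) (𝓝 0) := by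
    have hc := ((phi_cont hp).continuousAt (x := 1)).tendsto.comp (tendsto_sinp_pip2 hp)
    have hval : (1 - (1:ℝ) ^ p) ^ (1/p) = 0 := by
      rw [Real.one_rpow, sub_self, Real.zero_rpow (by positivity : (1:ℝ)/p ≠ 0)]
    rw [hval] at hc
    exact hc
  have h2 : Tendsto (fun x => coshp p x) (𝓝[<] (pip p / 2))
      (𝓝 ((1 + (sinhp p (pip p / 2)) ^ p) ^ (1/p))) :=
    ((psi_cont hp).continuousAt).tendsto.comp (tendsto_sinhp_pip2 hp)
  simpa using h1.mul h2

lemma F_eq (hp : 1 < p) {x : ℝ} (hx : x ∈ Ioo 0 (pip p / 2)) :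
    cosp p x * coshp p x = ((1 - sinp p x ^ p) * (1 + sinhp p x ^ p)) ^ (1/p) := by
  rw [cosp, coshp,
    ← Real.mul_rpow (A_pos hp hx).le (gH_base_pos hp (sinhp_pos hp hx.1).le).le]

lemma F_strictAntiOn (hp : 1 < p) :
    StrictAntiOn (fun x => cosp p x * coshp p x) (Ioo 0 (pip p / 2)) := by
  intro x hx y hy hxy
  simp only []
  rw [F_eq hp hx, F_eq hp hy]
  apply Real.rpow_lt_rpow
    (mul_pos (A_pos hp hy) (gH_base_pos hp (sinhp_pos hp hy.1).le)).le
    (G_strictAntiOn hp hx hy hxy) (div_pos one_pos (pp hp))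

lemma F_lt_one (hp : 1 < p) {x : ℝ} (hx : x ∈ Ioo 0 (pip p / 2)) :
    cosp p x * coshp p x < 1 := by
  have hy : x/2 ∈ Ioo 0 (pip p / 2) := ⟨by linarith [hx.1], by linarith [hx.1, hx.2]⟩
  have h1 : cosp p x * coshp p x < cosp p (x/2) * coshp p (x/2) :=
    F_strictAntiOn hp hy hx (by linarith [hx.1])
  have h2 : cosp p (x/2) * coshp p (x/2) ≤ 1 := by
    apply ge_of_tendsto (tendsto_F_zero hp)
    filter_upwards [Ioo_mem_nhdsGT_of_mem
      (show (0:ℝ) ∈ Ico 0 (x/2) from ⟨le_rfl, by linarith [hx.1]⟩)] with z hz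
    exact (F_strictAntiOn hp ⟨hz.1, lt_trans hz.2 hy.2⟩ hy hz.2).le
  linarith

end PAux

theorem stmt1 (p : ℝ) (hp : 1 < p) :
    StrictAntiOn (fun x => cosp p x * coshp p x) (Set.Ioo 0 (pip p / 2)) ∧
    Tendsto (fun x => cosp p x * coshp p x) (𝓝[>] 0) (𝓝 1) ∧
    Tendsto (fun x => cosp p x * coshp p x) (𝓝[<] (pip p / 2)) (𝓝 0) ∧
    ∀ x ∈ Set.Ioo 0 (pip p / 2), cosp p x < 1 / coshp p x := by
  refine ⟨PAux.F_strictAntiOn hp, PAux.tendsto_F_zero hp, PAux.tendsto_F_pip2 hp, ?_⟩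
  intro x hx
  have hcosh : 0 < coshp p x := by
    rw [coshp]
    exact Real.rpow_pos_of_pos (PAux.gH_base_pos hp (PAux.sinhp_spec hp hx.1.le).1) _
  rw [lt_div_iff₀ hcosh]
  exact PAux.F_lt_one hp hx
end

section
/- Let p > 1. Then for all x ∈ (0, π_p/2), (p+1)·sin_p(x)/x + 1/cos_p(x) > p + 2. -/
open Real Set Filter Topology

section Aux
open intervalIntegral MeasureTheory

lemma my_amgm {p u : ℝ} (hp : 1 < p) (hu : 0 < u) :
    p ≤ u ^ (1/p - 1) + (p - 1) * u ^ (1/p) := by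
  have hp0 : (0:ℝ) < p := by linarith
  have hple : 1/p ≤ 1 := by rw [div_le_one hp0]; linarith
  have h1 : (u ^ (1/p - 1)) ^ (1/p) * (u ^ (1/p)) ^ (1 - 1/p) ≤
      (1/p) * u ^ (1/p - 1) + (1 - 1/p) * u ^ (1/p) :=
    Real.geom_mean_le_arith_mean2_weighted (by positivity) (by linarith)
      (by positivity) (by positivity) (by ring)
  have h2 : (u ^ (1/p - 1)) ^ (1/p) * (u ^ (1/p)) ^ (1 - 1/p) = 1 := by
    rw [← Real.rpow_mul hu.le, ← Real.rpow_mul hu.le, ← Real.rpow_add hu]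
    rw [show (1/p - 1) * (1/p) + 1/p * (1 - 1/p) = 0 by ring, Real.rpow_zero]
  rw [h2] at h1
  have := mul_le_mul_of_nonneg_left h1 hp0.le
  calc p = p * 1 := by ring
    _ ≤ p * ((1/p) * u ^ (1/p - 1) + (1 - 1/p) * u ^ (1/p)) := this
    _ = u ^ (1/p - 1) + (p - 1) * u ^ (1/p) := by field_simp

lemma my_h {p u : ℝ} (hp : 1 < p) (hu0 : 0 < u) (hu1 : u < 1) :
    p + 2 < p * u ^ (1/p) + u ^ (1/p - 1) + u ^ (-(1/p)) := by
  have hp0 : (0:ℝ) < p := by linarith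
  set c := u ^ (1/p) with hc
  have hcpos : 0 < c := Real.rpow_pos_of_pos hu0 _
  have hc1 : c < 1 := Real.rpow_lt_one hu0.le hu1 (by positivity)
  have hinv : u ^ (-(1/p)) = c⁻¹ := by rw [Real.rpow_neg hu0.le]
  have h2 : 2 < c + c⁻¹ := by
    rw [show c + c⁻¹ = (c*c+1)/c by field_simp, lt_div_iff₀ hcpos]
    nlinarith
  have h5 := my_amgm hp hu0
  rw [hinv]
  nlinarith

lemma my_key {p s : ℝ} (hp : 1 < p) (hs0 : 0 < s) (hs1 : s < 1) :
    p + 2 < (p + 1) * (s / ∫ t in (0:ℝ)..s, (1 - t ^ p) ^ (-1 / p)) +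
      1 / (1 - s ^ p) ^ (1 / p) := by
  have hp0 : (0:ℝ) < p := by linarith
  set F : ℝ → ℝ := fun t => (1 - t ^ p) ^ (-1 / p) with hF
  set A : ℝ → ℝ := fun y => ∫ t in (0:ℝ)..y, F t with hA
  set C : ℝ → ℝ := fun y => (1 - y ^ p) ^ (1 / p) with hC
  -- positivity of 1 - t^p
  have hu : ∀ t : ℝ, 0 ≤ t → t < 1 → 0 < 1 - t ^ p := by
    intro t ht ht1
    have := Real.rpow_lt_one ht ht1 hp0
    linarith
  -- continuity of F
  have hFca : ∀ t : ℝ, 0 ≤ t → t < 1 → ContinuousAt F t := by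
    intro t ht ht1
    have h1 : ContinuousAt (fun y : ℝ => 1 - y ^ p) t :=
      continuousAt_const.sub (Real.continuousAt_rpow_const t p (Or.inr hp0.le))
    exact h1.rpow_const (Or.inl (hu t ht ht1).ne')
  have hFint : ∀ b : ℝ, 0 ≤ b → b < 1 → IntervalIntegrable F volume 0 b := by
    intro b hb hb1
    apply ContinuousOn.intervalIntegrable
    intro t ht
    rw [uIcc_of_le hb] at ht
    exact (hFca t ht.1 (lt_of_le_of_lt ht.2 hb1)).continuousWithinAt
  have hF1 : ∀ t : ℝ, 0 ≤ t → t < 1 → 1 ≤ F t := by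
    intro t ht ht1
    apply Real.one_le_rpow_of_pos_of_le_one_of_nonpos (hu t ht ht1)
    · have : (0:ℝ) ≤ t ^ p := Real.rpow_nonneg ht p
      linarith
    · rw [neg_div]
      exact neg_nonpos.mpr (by positivity)
  -- A y ≥ y
  have hAge : ∀ y : ℝ, 0 ≤ y → y < 1 → y ≤ A y := by
    intro y hy hy1
    have h1 : (∫ t in (0:ℝ)..y, (1:ℝ)) ≤ A y := by
      apply integral_mono_on hy intervalIntegrable_const (hFint y hy hy1)
      intro t ht
      exact hF1 t ht.1 (lt_of_le_of_lt ht.2 hy1)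
    simpa using h1
  have hApos : ∀ y : ℝ, 0 < y → y < 1 → 0 < A y := fun y hy hy1 =>
    lt_of_lt_of_le hy (hAge y hy.le hy1)
  -- the auxiliary function
  set g : ℝ → ℝ := fun y => (p+1) * (y * C y) + A y - (p+2) * (C y * A y) with hg
  -- derivative of g is positive on (0, s)
  have hgd : ∀ x ∈ Ioo (0:ℝ) s, HasDerivAt g
      ((p+1) * (1 * C x + x * (-(x ^ (p-1) * (1 - x ^ p) ^ (1/p - 1)))) + F x -
        (p+2) * ((-(x ^ (p-1) * (1 - x ^ p) ^ (1/p - 1))) * A x + C x * F x)) x := by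
    intro x hx
    have hx0 : 0 < x := hx.1
    have hx1 : x < 1 := lt_trans hx.2 hs1
    have hux : 0 < 1 - x ^ p := hu x hx0.le hx1
    have h1 : HasDerivAt (fun y : ℝ => y ^ p) (p * x ^ (p-1)) x :=
      Real.hasDerivAt_rpow_const (Or.inl hx0.ne')
    have h2 : HasDerivAt (fun y : ℝ => 1 - y ^ p) (-(p * x ^ (p-1))) x := h1.const_sub 1
    have h3 : HasDerivAt (fun v : ℝ => v ^ (1/p)) (1/p * (1 - x ^ p) ^ (1/p - 1)) (1 - x ^ p) :=
      Real.hasDerivAt_rpow_const (Or.inl hux.ne')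
    have hCd : HasDerivAt C (-(x ^ (p-1) * (1 - x ^ p) ^ (1/p - 1))) x := by
      have := h3.comp x h2
      convert this using 1
      · rfl
      · rfl
      · rfl
      have hp1 : (1:ℝ)/p * p = 1 := by field_simp
      linear_combination hp1 * (x ^ (p-1) * (1 - x ^ p) ^ (1/p - 1))
    have hAd : HasDerivAt A (F x) x := by
      apply intervalIntegral.integral_hasDerivAt_right (hFint x hx0.le hx1)
      · apply ContinuousOn.stronglyMeasurableAtFilter isOpen_Ioo (s := Ioo (0:ℝ) 1)
        · intro t ht
          exact (hFca t ht.1.le ht.2).continuousWithinAt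
        · exact ⟨hx0, hx1⟩
      · exact hFca x hx0.le hx1
    exact ((((hasDerivAt_id x).mul hCd).const_mul (p+1)).add hAd).sub
      ((hCd.mul hAd).const_mul (p+2))
  have hGpos : ∀ x ∈ Ioo (0:ℝ) s,
      0 < (p+1) * (1 * C x + x * (-(x ^ (p-1) * (1 - x ^ p) ^ (1/p - 1)))) + F x -
        (p+2) * ((-(x ^ (p-1) * (1 - x ^ p) ^ (1/p - 1))) * A x + C x * F x) := by
    intro x hx
    have hx0 : 0 < x := hx.1
    have hx1 : x < 1 := lt_trans hx.2 hs1
    have hux : 0 < 1 - x ^ p := hu x hx0.le hx1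
    have hux1 : 1 - x ^ p < 1 := by
      have : (0:ℝ) < x ^ p := Real.rpow_pos_of_pos hx0 p
      linarith
    set u : ℝ := 1 - x ^ p with hudef
    set a : ℝ := u ^ (1/p) with ha
    set b : ℝ := u ^ (1/p - 1) with hb
    set d : ℝ := u ^ (-(1/p)) with hd
    have hFx : F x = d := by rw [hF]; simp only [hd, neg_div]; rfl
    have hCx : C x = a := rfl
    have had : a * d = 1 := by
      rw [ha, hd, ← Real.rpow_add hux]
      norm_num
    have hub : u * b = a := by
      rw [hb, ha]
      nth_rewrite 1 [← Real.rpow_one u]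
      rw [← Real.rpow_add hux]
      norm_num
    have hxp : x ^ (p-1) * x = x ^ p := by
      nth_rewrite 2 [← Real.rpow_one x]
      rw [← Real.rpow_add hx0]
      ring_nf
    have hb0 : 0 ≤ b := Real.rpow_nonneg hux.le _
    have hxpm : 0 ≤ x ^ (p-1) := Real.rpow_nonneg hx0.le _
    have hAx : x ≤ A x := hAge x hx0.le hx1
    have hmain := my_h hp hux hux1
    rw [hFx, hCx]
    have hterm : x ^ (p-1) * b * x ≤ x ^ (p-1) * b * A x :=
      mul_le_mul_of_nonneg_left hAx (by positivity)
    have hxb : x ^ (p-1) * b * x = (1 - u) * b := by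
      rw [hudef]
      nlinarith [hxp]
    nlinarith [hmain, hterm, hxb, had, hub]
  -- continuity of g on [0, s]
  have hCcont : ContinuousOn C (Icc 0 s) := by
    intro t ht
    have ht1 : t < 1 := lt_of_le_of_lt ht.2 hs1
    have h1 : ContinuousAt (fun y : ℝ => 1 - y ^ p) t :=
      continuousAt_const.sub (Real.continuousAt_rpow_const t p (Or.inr hp0.le))
    exact (h1.rpow_const (Or.inl (hu t ht.1 ht1).ne')).continuousWithinAt
  have hAcont : ContinuousOn A (Icc 0 s) := by
    have hint : IntegrableOn F (uIcc 0 s) volume := by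
      rw [uIcc_of_le hs0.le, integrableOn_Icc_iff_integrableOn_Ioc]
      exact (hFint s hs0.le hs1).1
    simpa [uIcc_of_le hs0.le] using intervalIntegral.continuousOn_primitive_interval hint
  have hgcont : ContinuousOn g (Icc 0 s) :=
    ((continuousOn_const.mul (continuousOn_id.mul hCcont)).add hAcont).sub
      (continuousOn_const.mul (hCcont.mul hAcont))
  -- monotonicity
  have hmono : StrictMonoOn g (Icc 0 s) := by
    apply strictMonoOn_of_deriv_pos (convex_Icc 0 s) hgcont
    intro x hx
    rw [interior_Icc] at hx
    rw [(hgd x hx).deriv]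
    exact hGpos x hx
  have hg0 : g 0 = 0 := by
    have hA0 : A 0 = 0 := intervalIntegral.integral_same
    simp [hg, hA0]
  have hgs : 0 < g s := by
    have := hmono (left_mem_Icc.mpr hs0.le) (right_mem_Icc.mpr hs0.le) hs0
    rwa [hg0] at this
  -- conclude
  have hAs : 0 < A s := hApos s hs0 hs1
  have hCs : 0 < C s := Real.rpow_pos_of_pos (hu s hs0.le hs1) _
  have heq : (p + 1) * (s / A s) + 1 / C s - (p + 2) = g s / (A s * C s) := by
    rw [hg]
    field_simp
  have : 0 < g s / (A s * C s) := by positivity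
  rw [← heq] at this
  linarith

end Aux

theorem stmt6 (p : ℝ) (hp : 1 < p) :
    ∀ x ∈ Set.Ioo 0 (pip p / 2),
      (p + 1) * (sinp p x / x) + 1 / cosp p x > p + 2 := by
  intro x hx
  obtain ⟨hx0, hx2⟩ := hx
  have hpip : pip p / 2 = arcsinp p 1 := by rw [pip]; ring
  rw [hpip] at hx2
  have hI : IntervalIntegrable (fun t : ℝ => (1 - t ^ p) ^ (-1 / p)) MeasureTheory.volume 0 1 := by
    by_contra h
    have h0 : arcsinp p 1 = 0 := intervalIntegral.integral_undef h
    rw [h0] at hx2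
    linarith
  have hcont : ContinuousOn (arcsinp p) (Icc 0 1) := by
    have hint : MeasureTheory.IntegrableOn (fun t : ℝ => (1 - t ^ p) ^ (-1 / p))
        (uIcc (0:ℝ) 1) MeasureTheory.volume := by
      rw [uIcc_of_le zero_le_one, integrableOn_Icc_iff_integrableOn_Ioc]
      exact hI.1
    show ContinuousOn (fun x => ∫ t in (0:ℝ)..x, (1 - t ^ p) ^ (-1 / p)) (Icc 0 1)
    simpa [uIcc_of_le (zero_le_one (α := ℝ))] using
      intervalIntegral.continuousOn_primitive_interval hint
  have harc0 : arcsinp p 0 = 0 := intervalIntegral.integral_same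
  have hsurj : x ∈ arcsinp p '' Icc 0 1 := by
    apply intermediate_value_Icc zero_le_one hcont
    rw [harc0]
    exact ⟨hx0.le, hx2.le⟩
  obtain ⟨a, ha, haeq⟩ := hsurj
  have hex : ∃ a ∈ Icc (0:ℝ) 1, arcsinp p a = x := ⟨a, ha, haeq⟩
  have hmem : sinp p x ∈ Icc (0:ℝ) 1 := Function.invFunOn_mem hex
  have hax : arcsinp p (sinp p x) = x := Function.invFunOn_eq hex
  set s := sinp p x with hs
  have hs0 : 0 < s := by
    rcases eq_or_lt_of_le hmem.1 with h | h
    · exfalso; rw [← h, harc0] at hax; linarith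
    · exact h
  have hs1 : s < 1 := by
    rcases eq_or_lt_of_le hmem.2 with h | h
    · exfalso; rw [h] at hax; linarith
    · exact h
  have := my_key hp hs0 hs1
  rw [show (∫ t in (0:ℝ)..s, (1 - t ^ p) ^ (-1 / p)) = x from hax] at this
  exact this
end

section
/- Let p > 1. Then for all x > 0, (p+1)·sinh_p(x)/x + 1/cosh_p(x) > p + 2. -/
open Real Set Filter Topology

namespace Stmt7Aux


noncomputable def g (p t : ℝ) : ℝ := (1 + |t| ^ p) ^ (-1 / p)

noncomputable def G (p y : ℝ) : ℝ := ∫ t in (0:ℝ)..y, g p t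

variable {p : ℝ}

lemma base_pos (hp : 0 < p) (t : ℝ) : 0 < 1 + |t| ^ p := by positivity

lemma g_pos (hp : 0 < p) (t : ℝ) : 0 < g p t :=
  Real.rpow_pos_of_pos (base_pos hp t) _

lemma g_le_one (hp : 0 < p) (t : ℝ) : g p t ≤ 1 :=
  Real.rpow_le_one_of_one_le_of_nonpos
    (le_add_of_nonneg_right (Real.rpow_nonneg (abs_nonneg t) p))
    (by rw [neg_div]; exact neg_nonpos.mpr (by positivity))

lemma g_cont (hp : 0 < p) : Continuous (g p) := by
  have h1 : Continuous fun t : ℝ => 1 + |t| ^ p :=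
    continuous_const.add (continuous_abs.rpow_const fun x => Or.inr hp.le)
  exact h1.rpow_const fun t => Or.inl (base_pos hp t).ne'

lemma G_hasDerivAt (hp : 0 < p) (y : ℝ) : HasDerivAt (G p) (g p y) y :=
  ((g_cont hp).integral_hasStrictDerivAt 0 y).hasDerivAt

lemma G_cont (hp : 0 < p) : Continuous (G p) :=
  continuous_iff_continuousAt.mpr fun y => (G_hasDerivAt hp y).continuousAt

lemma arsinhp_eq (hp : 0 < p) {y : ℝ} (hy : 0 ≤ y) : arsinhp p y = G p y := by
  refine intervalIntegral.integral_congr fun t ht => ?_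
  rw [uIcc_of_le hy] at ht
  simp [g, abs_of_nonneg ht.1]

lemma G_strictMono (hp : 0 < p) {a b : ℝ} (hab : a < b) : G p a < G p b := by
  have h : G p b - G p a = ∫ t in a..b, g p t := by
    rw [G, G, intervalIntegral.integral_interval_sub_left
      ((g_cont hp).intervalIntegrable 0 b) ((g_cont hp).intervalIntegrable 0 a)]
  have hpos : 0 < ∫ t in a..b, g p t :=
    intervalIntegral.intervalIntegral_pos_of_pos ((g_cont hp).intervalIntegrable a b) (g_pos hp) hab
  linarith

lemma G_zero : G p 0 = 0 := intervalIntegral.integral_same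

lemma G_le (hp : 0 < p) {y : ℝ} (hy : 0 ≤ y) : G p y ≤ y := by
  have h := intervalIntegral.integral_mono_on hy ((g_cont hp).intervalIntegrable 0 y)
    (_root_.intervalIntegrable_const (μ := MeasureTheory.volume) (c := (1:ℝ))) (fun t _ => g_le_one hp t)
  simpa [G] using h

lemma G_nonneg (hp : 0 < p) {y : ℝ} (hy : 0 ≤ y) : 0 ≤ G p y := by
  rcases eq_or_lt_of_le hy with rfl | h
  · simp [G_zero]
  · exact le_of_lt (G_zero (p := p) ▸ G_strictMono hp h)

lemma exists_G_ge (hp : 1 < p) (x : ℝ) : ∃ M, 0 ≤ M ∧ x ≤ G p M := by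
  have hp0 : 0 < p := lt_trans one_pos hp
  set c : ℝ := (2:ℝ) ^ (-1/p) with hc
  have hc0 : 0 < c := Real.rpow_pos_of_pos two_pos _
  set M : ℝ := max 1 (Real.exp (x / c)) with hM
  have hM1 : 1 ≤ M := le_max_left _ _
  have hM0 : 0 < M := lt_of_lt_of_le one_pos hM1
  refine ⟨M, by linarith, ?_⟩
  -- lower bound g on [1, M]
  have hbound : ∀ t ∈ Icc (1:ℝ) M, c * t⁻¹ ≤ g p t := by
    intro t ht
    have ht1 : 1 ≤ t := ht.1
    have ht0 : 0 < t := lt_of_lt_of_le one_pos ht1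
    have htp : (1:ℝ) ≤ t ^ p := Real.one_le_rpow ht1 hp0.le
    have h1 : 1 + |t| ^ p ≤ 2 * t ^ p := by
      rw [abs_of_nonneg ht0.le]; linarith
    have h2 : g p t ≥ (2 * t ^ p) ^ (-1/p) := by
      apply Real.rpow_le_rpow_of_nonpos (base_pos hp0 t) h1
      rw [neg_div]; exact neg_nonpos.mpr (by positivity)
    have h3 : (2 * t ^ p) ^ (-1/p) = c * t⁻¹ := by
      rw [Real.mul_rpow (by norm_num) (Real.rpow_nonneg ht0.le p), ← hc]
      congr 1
      rw [← Real.rpow_mul ht0.le, show p * (-1/p) = -1 by field_simp, Real.rpow_neg_one]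
    linarith [h3 ▸ h2]
  -- integral comparison on [1, M]
  have hint1 : IntervalIntegrable (fun t : ℝ => c * t⁻¹) MeasureTheory.volume 1 M := by
    apply ContinuousOn.intervalIntegrable
    apply (continuousOn_const.mul (continuousOn_inv₀.mono ?_))
    intro t ht
    rw [uIcc_of_le hM1] at ht
    exact ne_of_gt (lt_of_lt_of_le one_pos ht.1)
  have hcomp : (∫ t in (1:ℝ)..M, c * t⁻¹) ≤ ∫ t in (1:ℝ)..M, g p t :=
    intervalIntegral.integral_mono_on hM1 hint1 ((g_cont hp0).intervalIntegrable 1 M) hbound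
  have hval : (∫ t in (1:ℝ)..M, c * t⁻¹) = c * Real.log M := by
    rw [intervalIntegral.integral_const_mul, integral_inv_of_pos one_pos hM0, div_one]
  have hlog : x / c ≤ Real.log M := by
    have : Real.exp (x / c) ≤ M := le_max_right _ _
    calc x / c = Real.log (Real.exp (x / c)) := (Real.log_exp _).symm
    _ ≤ Real.log M := Real.log_le_log (Real.exp_pos _) this
  have hx : x ≤ c * Real.log M := by
    rw [div_le_iff₀ hc0] at hlog; linarith [hlog]
  have hsplit : G p M = G p 1 + ∫ t in (1:ℝ)..M, g p t := by
    rw [G, G, ← intervalIntegral.integral_add_adjacent_intervals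
      ((g_cont hp0).intervalIntegrable 0 1) ((g_cont hp0).intervalIntegrable 1 M)]
  have hG1 : 0 ≤ G p 1 := G_nonneg hp0 zero_le_one
  linarith

noncomputable def F (p y : ℝ) : ℝ := (p + 1) * y + (g p y - (p + 2)) * G p y

lemma F_cont (hp : 0 < p) : Continuous (F p) :=
  (continuous_const.mul continuous_id).add (((g_cont hp).sub continuous_const).mul (G_cont hp))

lemma F_zero : F p 0 = 0 := by simp [F, G_zero]

lemma F_deriv_pos (hp : 1 < p) {y : ℝ} (hy : 0 < y) :
    ∃ d, HasDerivAt (F p) d y ∧ 0 < d := by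
  have hp0 : 0 < p := lt_trans one_pos hp
  set b : ℝ := 1 + y ^ p with hbdef
  have hyp0 : 0 < y ^ p := Real.rpow_pos_of_pos hy p
  have hb1 : 1 < b := by simp [hbdef]; linarith
  have hb0 : 0 < b := lt_trans one_pos hb1
  set u : ℝ := b ^ (-1/p) with hudef
  have hu0 : 0 < u := Real.rpow_pos_of_pos hb0 _
  have hu1 : u < 1 := Real.rpow_lt_one_of_one_lt_of_neg hb1
    (by rw [neg_div]; exact neg_neg_of_pos (by positivity))
  -- derivative of g at y
  have hpow : HasDerivAt (fun t : ℝ => t ^ p) (p * y ^ (p - 1)) y :=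
    Real.hasDerivAt_rpow_const (Or.inl hy.ne')
  have hbase : HasDerivAt (fun t : ℝ => 1 + t ^ p) (p * y ^ (p - 1)) y := hpow.const_add 1
  have hinner : HasDerivAt (fun t : ℝ => (1 + t ^ p) ^ (-1/p))
      ((p * y ^ (p - 1)) * (-1/p) * (1 + y ^ p) ^ (-1/p - 1)) y :=
    hbase.rpow_const (Or.inl (by positivity))
  have hev : g p =ᶠ[nhds y] fun t : ℝ => (1 + t ^ p) ^ (-1/p) := by
    filter_upwards [eventually_gt_nhds hy] with t ht
    simp [g, abs_of_nonneg ht.le]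
  have hg : HasDerivAt (g p) ((p * y ^ (p - 1)) * (-1/p) * b ^ (-1/p - 1)) y :=
    hinner.congr_of_eventuallyEq hev
  have hG := G_hasDerivAt hp0 y
  have hF : HasDerivAt (F p)
      ((p + 1) * 1 + (((p * y ^ (p - 1)) * (-1/p) * b ^ (-1/p - 1)) * G p y
        + (g p y - (p + 2)) * g p y)) y :=
    ((hasDerivAt_id y).const_mul (p + 1)).add ((hg.sub_const (p + 2)).mul hG)
  refine ⟨_, hF, ?_⟩
  -- now prove positivity
  have hgy : g p y = u := by rw [g, abs_of_nonneg hy.le]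
  have hw : b ^ (-1/p - 1) = u / b := by
    rw [Real.rpow_sub hb0, Real.rpow_one]
  have hyp1 : y ^ (p - 1) * y = y ^ p := by
    rw [← Real.rpow_add_one hy.ne' (p-1), sub_add_cancel]
  have hd1 : (p * y ^ (p - 1)) * (-1/p) * b ^ (-1/p - 1) = -(y ^ (p-1) * (u / b)) := by
    rw [hw]; field_simp
  have hGle := G_le hp0 hy.le
  have hGnn := G_nonneg hp0 hy.le
  have hcoef : 0 ≤ y ^ (p-1) * (u / b) := by positivity
  have hterm : -(y ^ (p-1) * (u / b)) * G p y ≥ -(y ^ (p-1) * (u / b)) * y := by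
    apply mul_le_mul_of_nonpos_left hGle (by linarith)
  have hterm2 : -(y ^ (p-1) * (u / b)) * y = -(y ^ p * u / b) := by
    rw [← hyp1]; ring
  have hyb : y ^ p = b - 1 := by simp [hbdef]
  -- Bernoulli: u^p ≥ 1 + p (u - 1), and u^p = 1/b
  have hup : u ^ p = b⁻¹ := by
    rw [hudef, ← Real.rpow_mul hb0.le, show -1/p * p = -1 by field_simp, Real.rpow_neg_one]
  have hbern : 1 + p * (u - 1) ≤ u ^ p := by
    have := one_add_mul_self_le_rpow_one_add (s := u - 1) (by linarith) hp.le
    simpa using this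
  rw [hup] at hbern
  -- assemble
  have hkey : -(y ^ p * u / b) = -(u - u * b⁻¹) := by
    rw [hyb]; field_simp
  rw [hgy, hd1]
  have hub : u * (1 + p * (u - 1)) ≤ u * b⁻¹ := by
    exact mul_le_mul_of_nonneg_left hbern hu0.le
  nlinarith [hterm, hterm2 ▸ hterm, sq_nonneg (1 - u), hkey, mul_pos hu0 hu0]

lemma F_pos (hp : 1 < p) {y : ℝ} (hy : 0 < y) : 0 < F p y := by
  have hp0 : 0 < p := lt_trans one_pos hp
  have hmono : StrictMonoOn (F p) (Ici 0) := by
    apply strictMonoOn_of_deriv_pos (convex_Ici 0) (F_cont hp0).continuousOn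
    intro t ht
    rw [interior_Ici] at ht
    obtain ⟨d, hd, hdp⟩ := F_deriv_pos hp ht
    rwa [hd.deriv]
  have := hmono (self_mem_Ici) (le_of_lt hy : (0:ℝ) ≤ y) hy
  rwa [F_zero] at this

lemma sinhp_spec (hp : 1 < p) {x : ℝ} (hx : 0 < x) :
    0 < sinhp p x ∧ G p (sinhp p x) = x := by
  have hp0 : 0 < p := lt_trans one_pos hp
  obtain ⟨M, hM0, hMx⟩ := exists_G_ge hp x
  have hsurj : ∃ a ∈ Ici (0:ℝ), arsinhp p a = x := by
    have h1 : x ∈ Icc (G p 0) (G p M) := by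
      rw [G_zero]; exact ⟨hx.le, hMx⟩
    obtain ⟨y, hy, hGy⟩ := intermediate_value_Icc hM0 ((G_cont hp0).continuousOn) h1
    exact ⟨y, hy.1, by rw [arsinhp_eq hp0 hy.1, hGy]⟩
  have hmem : sinhp p x ∈ Ici (0:ℝ) := Function.invFunOn_mem hsurj
  have heq : arsinhp p (sinhp p x) = x := Function.invFunOn_eq hsurj
  have hGeq : G p (sinhp p x) = x := by rw [← arsinhp_eq hp0 hmem, heq]
  refine ⟨?_, hGeq⟩
  rcases eq_or_lt_of_le (Set.mem_Ici.mp hmem : (0:ℝ) ≤ sinhp p x) with h0 | h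
  · exfalso; rw [← h0, G_zero] at hGeq; linarith
  · exact h

end Stmt7Aux

theorem stmt7 (p : ℝ) (hp : 1 < p) :
    ∀ x > (0:ℝ), (p + 1) * (sinhp p x / x) + 1 / coshp p x > p + 2 := by
  intro x hx
  obtain ⟨hs0, hGs⟩ := Stmt7Aux.sinhp_spec hp hx
  set s := sinhp p x with hs
  have hu : Stmt7Aux.g p s = 1 / coshp p x := by
    rw [Stmt7Aux.g, abs_of_nonneg hs0.le, coshp, neg_div, Real.rpow_neg (by positivity), one_div]
    rw [hs, eq_comm, one_div]
  have hF := Stmt7Aux.F_pos hp hs0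
  rw [Stmt7Aux.F, hGs, hu] at hF
  have hkey : (p + 1) * (s / x) + 1 / coshp p x - (p + 2)
      = ((p + 1) * s + (1 / coshp p x - (p + 2)) * x) / x := by
    field_simp
    ring
  have hpos : 0 < ((p + 1) * s + (1 / coshp p x - (p + 2)) * x) / x := div_pos hF hx
  rw [← hkey] at hpos
  linarith
end

section
/- Let p > 1. Then for all x ∈ (0, π_p/2), p·sin_p(x)/x + tan_p(x)/x > 1 + p. -/
open Real Set Filter Topology

namespace Stmt8Aux

variable {p : ℝ}

/-- Continuity of the arcsinp integrand on `[0,1)`. -/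
lemma contAt_f (hp : 1 < p) {t : ℝ} (ht : t ∈ Set.Ico (0:ℝ) 1) :
    ContinuousAt (fun u : ℝ => (1 - u ^ p) ^ (-1 / p)) t := by
  have h1 : ContinuousAt (fun u : ℝ => 1 - u ^ p) t :=
    continuousAt_const.sub (Real.continuousAt_rpow_const t p (Or.inr (by linarith)))
  have h2 : (1 : ℝ) - t ^ p ≠ 0 := by
    have : t ^ p < 1 := Real.rpow_lt_one ht.1 ht.2 (by linarith)
    linarith
  exact ContinuousAt.comp (f := fun u : ℝ => 1 - u ^ p)
    (Real.continuousAt_rpow_const _ _ (Or.inl h2)) h1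

lemma f_nonneg (hp : 1 < p) {t : ℝ} (ht : t ∈ Set.Icc (0:ℝ) 1) :
    0 ≤ (1 - t ^ p) ^ (-1 / p) := by
  apply Real.rpow_nonneg
  have : t ^ p ≤ 1 := Real.rpow_le_one ht.1 ht.2 (by linarith)
  linarith

/-- Integrability of the arcsinp integrand on `[0,1]` (improper at 1). -/
lemma f_integrable (hp : 1 < p) :
    IntervalIntegrable (fun t : ℝ => (1 - t ^ p) ^ (-1 / p)) MeasureTheory.volume 0 1 := by
  have hp0 : (0:ℝ) < p := by linarith
  have hg : IntervalIntegrable (fun t : ℝ => (1 - t) ^ (-1 / p)) MeasureTheory.volume 0 1 := by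
    have h0 : IntervalIntegrable (fun t : ℝ => t ^ (-1 / p)) MeasureTheory.volume 0 1 :=
      intervalIntegral.intervalIntegrable_rpow' (by
        rw [neg_div]
        have : 1 / p < 1 := by rw [div_lt_one hp0]; exact hp
        linarith)
    have := h0.comp_sub_left 1
    simpa using this.symm
  apply hg.mono_fun
  · apply Measurable.aestronglyMeasurable
    exact (measurable_const.sub (measurable_id.pow_const p)).pow_const _
  · rw [Filter.EventuallyLE]
    refine (MeasureTheory.ae_restrict_iff' measurableSet_uIoc).2 ?_
    filter_upwards with x hx
    rw [Set.uIoc_of_le (by norm_num : (0:ℝ) ≤ 1)] at hx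
    have hx0 : 0 < x := hx.1
    have hx1 : x ≤ 1 := hx.2
    have hxp : x ^ p ≤ x := by
      calc x ^ p ≤ x ^ (1:ℝ) := Real.rpow_le_rpow_of_exponent_ge hx0 hx1 hp.le
      _ = x := Real.rpow_one x
    have h1 : 0 ≤ 1 - x ^ p := by
      have : x ^ p ≤ 1 := Real.rpow_le_one hx0.le hx1 (by linarith)
      linarith
    rw [Real.norm_eq_abs, Real.norm_eq_abs, abs_of_nonneg (Real.rpow_nonneg h1 _),
      abs_of_nonneg (Real.rpow_nonneg (by linarith : (0:ℝ) ≤ 1 - x) _)]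
    rcases eq_or_lt_of_le hx1 with h|h
    · subst h
      simp [Real.zero_rpow (by positivity : -1 / x ≠ 0)]
    · exact Real.rpow_le_rpow_of_nonpos (by linarith) (by linarith) (by
        rw [neg_div]; exact neg_nonpos.mpr (by positivity))

/-- Key elementary inequality: for `v ∈ (0,1)`, `(1+p) v^p < p v^(p+1) + 1`. -/
lemma auxB (hp : 1 < p) {v : ℝ} (hv : v ∈ Set.Ioo (0:ℝ) 1) :
    (1 + p) * v ^ p < p * v ^ (p + 1) + 1 := by
  have hp0 : (0:ℝ) < p := by linarith
  set h : ℝ → ℝ := fun u => p * u ^ (p + 1) + 1 - (1 + p) * u ^ p with hh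
  have anti : StrictAntiOn h (Set.Icc v 1) := by
    apply strictAntiOn_of_deriv_neg (convex_Icc _ _)
    · apply ContinuousOn.sub
      · apply ContinuousOn.add _ continuousOn_const
        apply continuousOn_const.mul
        intro u hu
        exact (Real.continuousAt_rpow_const u (p + 1) (Or.inr (by linarith))).continuousWithinAt
      · apply continuousOn_const.mul
        intro u hu
        exact (Real.continuousAt_rpow_const u p (Or.inr (by linarith))).continuousWithinAt
    · intro u hu
      rw [interior_Icc] at hu
      have hu0 : 0 < u := lt_trans hv.1 hu.1
      have hd : HasDerivAt h
          (p * ((p + 1) * u ^ (p + 1 - 1)) - (1 + p) * (p * u ^ (p - 1))) u := by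
        exact (((Real.hasDerivAt_rpow_const (Or.inl hu0.ne')).const_mul p).add_const 1).sub
          ((Real.hasDerivAt_rpow_const (Or.inl hu0.ne')).const_mul (1 + p))
      rw [hd.deriv]
      have e1 : p + 1 - 1 = p := by ring
      rw [e1]
      have e2 : u ^ (p - 1) * u = u ^ p := by
        have h3 := Real.rpow_add hu0 (p - 1) 1
        rw [Real.rpow_one] at h3
        rw [← h3]
        norm_num
      have hw : 0 < u ^ (p - 1) := Real.rpow_pos_of_pos hu0 _
      rw [← e2]
      have hprod : 0 < p * (p + 1) * u ^ (p - 1) * (1 - u) :=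
        mul_pos (mul_pos (mul_pos hp0 (by linarith)) hw) (by linarith [hu.2])
      nlinarith [hprod]
  have h1 : h 1 = 0 := by simp [hh]; ring
  have := anti (Set.left_mem_Icc.2 hv.2.le) (Set.right_mem_Icc.2 hv.2.le) hv.2
  rw [h1] at this
  simp only [hh] at this
  linarith

/-- The main inequality after the substitution `y = sinp x`. -/
lemma auxA (hp : 1 < p) {y : ℝ} (hy : y ∈ Set.Ioo (0:ℝ) 1) :
    (1 + p) * arcsinp p y < p * y + y * (1 - y ^ p) ^ (-1 / p) := by
  have hp0 : (0:ℝ) < p := by linarith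
  set G : ℝ → ℝ := fun t => p * t + t * (1 - t ^ p) ^ (-1 / p) - (1 + p) * arcsinp p t with hG
  have hmono : StrictMonoOn G (Set.Icc 0 y) := by
    apply strictMonoOn_of_deriv_pos (convex_Icc _ _)
    · -- continuity on `[0, y]`
      have hfc : ContinuousOn (fun t : ℝ => (1 - t ^ p) ^ (-1 / p)) (Set.Icc 0 y) := fun t ht =>
        (contAt_f hp ⟨ht.1, lt_of_le_of_lt ht.2 hy.2⟩).continuousWithinAt
      have hint : IntervalIntegrable (fun t : ℝ => (1 - t ^ p) ^ (-1 / p))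
          MeasureTheory.volume 0 y := by
        apply ContinuousOn.intervalIntegrable
        rwa [Set.uIcc_of_le hy.1.le]
      have harc : ContinuousOn (arcsinp p) (Set.Icc 0 y) := by
        have h2 := intervalIntegral.continuousOn_primitive_interval' hint
          (Set.left_mem_uIcc (a := (0:ℝ)) (b := y))
        rw [Set.uIcc_of_le hy.1.le] at h2
        exact h2
      exact ((continuousOn_const.mul continuousOn_id).add
        (continuousOn_id.mul hfc)).sub (continuousOn_const.mul harc)
    · intro t ht
      rw [interior_Icc] at ht
      have ht0 : 0 < t := ht.1
      have ht1 : t < 1 := lt_trans ht.2 hy.2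
      set c : ℝ := 1 - t ^ p with hc_def
      have htp1 : t ^ p < 1 := Real.rpow_lt_one ht0.le ht1 hp0
      have htp0 : 0 < t ^ p := Real.rpow_pos_of_pos ht0 _
      have hc : 0 < c := by simp only [hc_def]; linarith
      have hc1 : c < 1 := by simp only [hc_def]; linarith
      -- derivative pieces
      have h1 : HasDerivAt (fun u : ℝ => u ^ p) (p * t ^ (p - 1)) t :=
        Real.hasDerivAt_rpow_const (Or.inl ht0.ne')
      have h2 : HasDerivAt (fun u : ℝ => 1 - u ^ p) (-(p * t ^ (p - 1))) t := by
        exact h1.const_sub 1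
      have h3 : HasDerivAt (fun z : ℝ => z ^ (-1 / p)) ((-1 / p) * c ^ (-1 / p - 1)) c :=
        Real.hasDerivAt_rpow_const (Or.inl hc.ne')
      have h4 : HasDerivAt (fun u : ℝ => (1 - u ^ p) ^ (-1 / p))
          ((-1 / p) * c ^ (-1 / p - 1) * (-(p * t ^ (p - 1)))) t :=
        by
          have h3' : HasDerivAt (fun z : ℝ => z ^ (-1 / p)) ((-1 / p) * c ^ (-1 / p - 1)) (1 - t ^ p) := h3
          exact h3'.comp t h2
      have h4' : HasDerivAt (fun u : ℝ => (1 - u ^ p) ^ (-1 / p))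
          (t ^ (p - 1) * c ^ (-1 / p - 1)) t := by
        convert h4 using 1
        field_simp
      have h5 : HasDerivAt (fun u : ℝ => u * (1 - u ^ p) ^ (-1 / p))
          (1 * ((1 - t ^ p) ^ (-1 / p)) + t * (t ^ (p - 1) * c ^ (-1 / p - 1))) t :=
        (hasDerivAt_id t).mul h4'
      have h6 : HasDerivAt (arcsinp p) ((1 - t ^ p) ^ (-1 / p)) t := by
        have hint : IntervalIntegrable (fun u : ℝ => (1 - u ^ p) ^ (-1 / p))
            MeasureTheory.volume 0 t := by
          apply ContinuousOn.intervalIntegrable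
          intro u hu
          rw [Set.uIcc_of_le ht0.le] at hu
          exact (contAt_f hp ⟨hu.1, lt_of_le_of_lt hu.2 ht1⟩).continuousWithinAt
        have hmeas : StronglyMeasurableAtFilter (fun u : ℝ => (1 - u ^ p) ^ (-1 / p))
            (𝓝 t) MeasureTheory.volume := by
          refine ContinuousOn.stronglyMeasurableAtFilter isOpen_Ioo ?_ t ⟨ht0, ht1⟩
          intro u hu
          exact (contAt_f hp ⟨hu.1.le, hu.2⟩).continuousWithinAt
        exact intervalIntegral.integral_hasDerivAt_right hint hmeas
          (contAt_f hp ⟨ht0.le, ht1⟩)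
      have h7 : HasDerivAt G
          (p * 1 + (1 * ((1 - t ^ p) ^ (-1 / p)) + t * (t ^ (p - 1) * c ^ (-1 / p - 1)))
            - (1 + p) * ((1 - t ^ p) ^ (-1 / p))) t :=
        (((hasDerivAt_id t).const_mul p).add h5).sub (h6.const_mul (1 + p))
      rw [h7.deriv]
      -- positivity of the derivative
      set v : ℝ := c ^ (1 / p) with hv_def
      have hv0 : 0 < v := Real.rpow_pos_of_pos hc _
      have hv1 : v < 1 := Real.rpow_lt_one hc.le hc1 (by positivity)
      have hvp : v ^ p = c := by
        rw [hv_def, ← Real.rpow_mul hc.le, one_div, inv_mul_cancel₀ hp0.ne', Real.rpow_one]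
      have hB := auxB hp ⟨hv0, hv1⟩
      have hvp1 : v ^ (p + 1) = c * v := by
        rw [Real.rpow_add hv0, Real.rpow_one, hvp]
      rw [hvp, hvp1] at hB
      have e1 : c ^ (-1 / p) = v⁻¹ := by
        rw [hv_def, neg_div, Real.rpow_neg hc.le]
      have e2 : c ^ (-1 / p - 1) = v⁻¹ * c⁻¹ := by
        rw [show -1 / p - 1 = -1 / p + (-1) by ring, Real.rpow_add hc, e1, Real.rpow_neg_one]
      have e3 : t * t ^ (p - 1) = 1 - c := by
        have h3 := Real.rpow_add ht0 (p - 1) 1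
        rw [Real.rpow_one] at h3
        rw [mul_comm, ← h3]
        simp only [hc_def]
        norm_num
      rw [e1, e2]
      have expr_eq : p * 1 + (1 * v⁻¹ + t * (t ^ (p - 1) * (v⁻¹ * c⁻¹))) - (1 + p) * v⁻¹
          = (p * (c * v) + 1 - (1 + p) * c) / (c * v) := by
        rw [show t * (t ^ (p - 1) * (v⁻¹ * c⁻¹)) = (t * t ^ (p - 1)) * (v⁻¹ * c⁻¹) by ring, e3]
        field_simp
        ring
      rw [expr_eq]
      exact div_pos (by linarith) (by positivity)
  have h0 : G 0 = 0 := by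
    simp [hG, arcsinp, intervalIntegral.integral_same]
  have hGy := hmono (Set.left_mem_Icc.2 hy.1.le) (Set.right_mem_Icc.2 hy.1.le) hy.1
  rw [h0] at hGy
  simp only [hG] at hGy
  linarith

end Stmt8Aux

theorem stmt8 (p : ℝ) (hp : 1 < p) :
    ∀ x ∈ Set.Ioo 0 (pip p / 2),
      p * (sinp p x / x) + tanp p x / x > 1 + p := by
  intro x hx
  obtain ⟨hx0, hx2⟩ := hx
  have hp0 : (0:ℝ) < p := by linarith
  have hpi : pip p / 2 = arcsinp p 1 := by rw [pip]; ring
  have harc0 : arcsinp p 0 = 0 := intervalIntegral.integral_same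
  have hcont1 : ContinuousOn (arcsinp p) (Set.Icc 0 1) := by
    have h2 := intervalIntegral.continuousOn_primitive_interval'
      (Stmt8Aux.f_integrable hp) (Set.left_mem_uIcc (a := (0:ℝ)) (b := 1))
    rw [Set.uIcc_of_le zero_le_one] at h2
    exact h2
  have hx_mem : x ∈ Set.Icc (arcsinp p 0) (arcsinp p 1) := by
    rw [harc0]
    exact ⟨hx0.le, by rw [← hpi]; exact hx2.le⟩
  obtain ⟨y, hy, hyx⟩ := intermediate_value_Icc zero_le_one hcont1 hx_mem
  have hex : ∃ a ∈ Set.Icc (0:ℝ) 1, arcsinp p a = x := ⟨y, hy, hyx⟩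
  have hs_mem : sinp p x ∈ Set.Icc (0:ℝ) 1 := Function.invFunOn_mem hex
  have hs_eq : arcsinp p (sinp p x) = x := Function.invFunOn_eq hex
  set s := sinp p x with hs_def
  have hs0 : 0 < s := by
    rcases hs_mem.1.lt_or_eq with h | h
    · exact h
    · exfalso; rw [← h, harc0] at hs_eq; linarith
  have hs1 : s < 1 := by
    rcases hs_mem.2.lt_or_eq with h | h
    · exact h
    · exfalso; rw [h, ← hpi] at hs_eq; linarith
  have hsp1 : s ^ p < 1 := Real.rpow_lt_one hs0.le hs1 hp0
  have hA := Stmt8Aux.auxA hp ⟨hs0, hs1⟩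
  rw [hs_eq] at hA
  have hcos : cosp p x = (1 - s ^ p) ^ (1 / p) := rfl
  have htan : tanp p x = s * (1 - s ^ p) ^ (-1 / p) := by
    rw [tanp, hcos, div_eq_mul_inv, ← Real.rpow_neg (by linarith), neg_div]
  rw [gt_iff_lt, htan,
    show p * (s / x) + s * (1 - s ^ p) ^ (-1 / p) / x
      = (p * s + s * (1 - s ^ p) ^ (-1 / p)) / x by ring,
    lt_div_iff₀ hx0]
  linarith
end

section
/- Let p > 1. Then for all x > 0, p·sinh_p(x)/x + tanh_p(x)/x > 1 + p. -/
open Real Set Filter Topology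

/- ### Auxiliary lemmas -/

lemma stmt9_cont_rpow {p : ℝ} (hp : 1 < p) : Continuous (fun t : ℝ => t ^ p) := by
  rw [continuous_iff_continuousAt]
  intro t
  exact Real.continuousAt_rpow_const t p (Or.inr (le_of_lt (lt_trans one_pos hp)))

lemma stmt9_contOn_F {p : ℝ} (hp : 1 < p) :
    ContinuousOn (fun t : ℝ => (1 + t ^ p) ^ (-1 / p)) (Set.Ici 0) := by
  apply ContinuousOn.rpow_const ((continuous_const.add (stmt9_cont_rpow hp)).continuousOn)
  intro t ht
  left
  have : (0:ℝ) ≤ t ^ p := Real.rpow_nonneg ht p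
  exact (by linarith : (0:ℝ) < 1 + t ^ p).ne'

lemma stmt9_integrable_F {p : ℝ} (hp : 1 < p) {a b : ℝ} (ha : 0 ≤ a) (hb : 0 ≤ b) :
    IntervalIntegrable (fun t : ℝ => (1 + t ^ p) ^ (-1 / p)) MeasureTheory.volume a b := by
  apply ContinuousOn.intervalIntegrable
  apply (stmt9_contOn_F hp).mono
  rw [Set.uIcc_eq_union]
  rintro t (ht | ht)
  · exact le_trans ha ht.1
  · exact le_trans hb ht.1

lemma stmt9_arsinhp_zero (p : ℝ) : arsinhp p 0 = 0 := intervalIntegral.integral_same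

lemma stmt9_hasDerivAt_arsinhp {p : ℝ} (hp : 1 < p) {y : ℝ} (hy : 0 < y) :
    HasDerivAt (arsinhp p) ((1 + y ^ p) ^ (-1 / p)) y := by
  apply intervalIntegral.integral_hasDerivAt_right (stmt9_integrable_F hp le_rfl hy.le)
  · exact ContinuousOn.stronglyMeasurableAtFilter isOpen_Ioi
      ((stmt9_contOn_F hp).mono (Set.Ioi_subset_Ici le_rfl)) y hy
  · apply ContinuousAt.rpow_const ((continuous_const.add (stmt9_cont_rpow hp)).continuousAt)
    left
    have : (0:ℝ) ≤ y ^ p := Real.rpow_nonneg hy.le p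
    exact (by linarith : (0:ℝ) < 1 + y ^ p).ne'

/-- Key positivity via Bernoulli. -/
lemma stmt9_key_pos {p : ℝ} (hp : 1 < p) {w : ℝ} (hw : 0 < w) :
    0 < p - p * (1 + w) ^ (-1 / p) - w * (1 + w) ^ (-1 / p - 1) := by
  have hp0 : (0:ℝ) < p := lt_trans one_pos hp
  set u : ℝ := 1 + w with hu_def
  have hu : 1 < u := by simp [hu_def]; linarith
  have hu0 : (0:ℝ) < u := by linarith
  set v : ℝ := u ^ (1 / p) with hv_def
  have hv : 1 < v := by
    rw [hv_def]
    exact Real.one_lt_rpow_iff_of_pos hu0 |>.mpr (Or.inl ⟨hu, by positivity⟩)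
  have hv0 : (0:ℝ) < v := by linarith
  have hA : u ^ (-1 / p) = v⁻¹ := by
    rw [neg_div, Real.rpow_neg hu0.le, hv_def]
  have hB : u ^ (-1 / p - 1) = v⁻¹ * u⁻¹ := by
    rw [sub_eq_add_neg, Real.rpow_add hu0, hA, Real.rpow_neg_one]
  have hvp : v ^ p = u := by
    rw [hv_def, ← Real.rpow_mul hu0.le, one_div, inv_mul_cancel₀ hp0.ne', Real.rpow_one]
  have hber : 1 + p * (v⁻¹ - 1) < u⁻¹ := by
    have h1 : 1 + p * (v⁻¹ - 1) < (1 + (v⁻¹ - 1)) ^ p :=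
      one_add_mul_self_lt_rpow_one_add (by nlinarith [inv_pos.mpr hv0])
        (by
          have : v⁻¹ < 1 := inv_lt_one_of_one_lt₀ hv
          linarith) hp
    have h2 : (1 + (v⁻¹ - 1)) = v⁻¹ := by ring
    rw [h2, Real.inv_rpow hv0.le, hvp] at h1
    exact h1
  rw [hA, hB]
  have hvinv : v⁻¹ < 1 := inv_lt_one_of_one_lt₀ hv
  have hvinv0 : 0 < v⁻¹ := inv_pos.mpr hv0
  have huinv0 : 0 < u⁻¹ := inv_pos.mpr hu0
  have hvv : v * v⁻¹ = 1 := mul_inv_cancel₀ hv0.ne'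
  have huu : u * u⁻¹ = 1 := mul_inv_cancel₀ hu0.ne'
  have hw_eq : w = u - 1 := by rw [hu_def]; ring
  rw [hw_eq]
  nlinarith [mul_lt_mul_of_pos_left hber hvinv0, mul_pos hvinv0 (sub_pos.mpr hvinv),
    mul_pos hp0 (sub_pos.mpr hvinv)]

/-- The key inequality in terms of `s = sinhp p x`. -/
lemma stmt9_main_ineq {p : ℝ} (hp : 1 < p) {s : ℝ} (hs : 0 < s) :
    (1 + p) * arsinhp p s < p * s + s * (1 + s ^ p) ^ (-1 / p) := by
  have hp0 : (0:ℝ) < p := lt_trans one_pos hp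
  set g : ℝ → ℝ := fun y => p * y + y * (1 + y ^ p) ^ (-1 / p) - (1 + p) * arsinhp p y
    with hg_def
  have h0 : g 0 = 0 := by
    simp [hg_def, stmt9_arsinhp_zero, Real.zero_rpow hp0.ne']
  have hmono : StrictMonoOn g (Set.Icc 0 s) := by
    apply strictMonoOn_of_deriv_pos (convex_Icc 0 s)
    · apply ContinuousOn.sub
      · apply ContinuousOn.add (continuousOn_const.mul continuousOn_id)
        apply ContinuousOn.mul continuousOn_id
        exact (stmt9_contOn_F hp).mono (fun t ht => ht.1)
      · apply ContinuousOn.mul continuousOn_const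
        have hint : MeasureTheory.IntegrableOn (fun t : ℝ => (1 + t ^ p) ^ (-1 / p))
            (Set.uIcc 0 s) MeasureTheory.volume := by
          apply ContinuousOn.integrableOn_compact isCompact_uIcc
          apply (stmt9_contOn_F hp).mono
          rw [Set.uIcc_of_le hs.le]
          exact fun t ht => ht.1
        have := intervalIntegral.continuousOn_primitive_interval hint
        rw [Set.uIcc_of_le hs.le] at this
        exact this
    · intro y hy
      rw [interior_Icc] at hy
      have hy0 : 0 < y := hy.1
      have hbase : (0:ℝ) < 1 + y ^ p := by
        have : (0:ℝ) < y ^ p := Real.rpow_pos_of_pos hy0 p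
        linarith
      have h1 : HasDerivAt (fun t : ℝ => t ^ p) (p * y ^ (p - 1)) y :=
        Real.hasDerivAt_rpow_const (Or.inl hy0.ne')
      have h2 : HasDerivAt (fun t : ℝ => 1 + t ^ p) (p * y ^ (p - 1)) y := h1.const_add 1
      have h3 : HasDerivAt (fun t : ℝ => (1 + t ^ p) ^ (-1 / p))
          (p * y ^ (p - 1) * (-1 / p) * (1 + y ^ p) ^ (-1 / p - 1)) y :=
        h2.rpow_const (Or.inl hbase.ne')
      have h4 : HasDerivAt (arsinhp p) ((1 + y ^ p) ^ (-1 / p)) y :=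
        stmt9_hasDerivAt_arsinhp hp hy0
      have hd : HasDerivAt g
          (p * 1 + (1 * (1 + y ^ p) ^ (-1 / p) +
            y * (p * y ^ (p - 1) * (-1 / p) * (1 + y ^ p) ^ (-1 / p - 1))) -
            (1 + p) * (1 + y ^ p) ^ (-1 / p)) y := by
        exact (((hasDerivAt_id y).const_mul p).add ((hasDerivAt_id y).mul h3)).sub
          (h4.const_mul (1 + p))
      have hyp : y * y ^ (p - 1) = y ^ p := by
        rw [Real.rpow_sub hy0, Real.rpow_one]
        field_simp
      have heq : p * 1 + (1 * (1 + y ^ p) ^ (-1 / p) +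
            y * (p * y ^ (p - 1) * (-1 / p) * (1 + y ^ p) ^ (-1 / p - 1))) -
            (1 + p) * (1 + y ^ p) ^ (-1 / p)
          = p - p * (1 + y ^ p) ^ (-1 / p) - y ^ p * (1 + y ^ p) ^ (-1 / p - 1) := by
        rw [← hyp]
        field_simp
        ring
      rw [hd.deriv, heq]
      exact stmt9_key_pos hp (Real.rpow_pos_of_pos hy0 p)
  have := hmono (Set.left_mem_Icc.mpr hs.le) (Set.right_mem_Icc.mpr hs.le) hs
  rw [h0] at this
  simp only [hg_def] at this
  linarith

/-- Lower bound for `arsinhp` forcing surjectivity. -/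
lemma stmt9_arsinhp_lower {p : ℝ} (hp : 1 < p) {S : ℝ} (hS : 1 ≤ S) :
    (2:ℝ) ^ (-1 / p) * Real.log S ≤ arsinhp p S := by
  have hp0 : (0:ℝ) < p := lt_trans one_pos hp
  have hsplit : arsinhp p S =
      (∫ t in (0:ℝ)..1, (1 + t ^ p) ^ (-1 / p)) + ∫ t in (1:ℝ)..S, (1 + t ^ p) ^ (-1 / p) := by
    rw [arsinhp]
    exact (intervalIntegral.integral_add_adjacent_intervals
      (stmt9_integrable_F hp le_rfl zero_le_one)
      (stmt9_integrable_F hp zero_le_one (by linarith))).symm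
  have h1 : (0:ℝ) ≤ ∫ t in (0:ℝ)..1, (1 + t ^ p) ^ (-1 / p) := by
    apply intervalIntegral.integral_nonneg zero_le_one
    intro t ht
    have : (0:ℝ) ≤ t ^ p := Real.rpow_nonneg ht.1 p
    positivity
  have h2 : (2:ℝ) ^ (-1 / p) * Real.log S ≤ ∫ t in (1:ℝ)..S, (1 + t ^ p) ^ (-1 / p) := by
    have hlog : Real.log S = ∫ t in (1:ℝ)..S, t⁻¹ := by
      rw [integral_inv_of_pos one_pos (by linarith : (0:ℝ) < S), div_one]
    have hintg : IntervalIntegrable (fun t : ℝ => (2:ℝ) ^ (-1 / p) * t⁻¹)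
        MeasureTheory.volume 1 S := by
      apply ContinuousOn.intervalIntegrable
      apply ContinuousOn.mul continuousOn_const
      apply ContinuousOn.inv₀ continuousOn_id
      intro t ht
      rw [Set.uIcc_of_le hS] at ht
      exact ne_of_gt (lt_of_lt_of_le one_pos ht.1)
    have hmono := intervalIntegral.integral_mono_on hS hintg
      (stmt9_integrable_F hp zero_le_one (by linarith)) ?_
    · calc (2:ℝ) ^ (-1 / p) * Real.log S
          = ∫ t in (1:ℝ)..S, (2:ℝ) ^ (-1 / p) * t⁻¹ := by
            rw [hlog, intervalIntegral.integral_const_mul]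
        _ ≤ _ := hmono
    · intro t ht
      have ht1 : (1:ℝ) ≤ t := ht.1
      have ht0 : (0:ℝ) < t := lt_of_lt_of_le one_pos ht1
      have htp : (1:ℝ) ≤ t ^ p := by
        calc (1:ℝ) = 1 ^ p := (Real.one_rpow p).symm
          _ ≤ t ^ p := Real.rpow_le_rpow zero_le_one ht1 hp0.le
      have key : ((2:ℝ) * t ^ p) ^ (-1 / p) ≤ (1 + t ^ p) ^ (-1 / p) := by
        apply Real.rpow_le_rpow_of_nonpos (by linarith) (by linarith)
        rw [neg_div]
        simp [le_of_lt, div_nonneg, hp0.le]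
      calc (2:ℝ) ^ (-1 / p) * t⁻¹ = ((2:ℝ) * t ^ p) ^ (-1 / p) := by
            rw [Real.mul_rpow zero_le_two (Real.rpow_nonneg ht0.le p)]
            congr 1
            rw [← Real.rpow_mul ht0.le]
            have hpe : p * (-1 / p) = -1 := by field_simp
            rw [hpe, Real.rpow_neg_one]
        _ ≤ (1 + t ^ p) ^ (-1 / p) := key
  rw [hsplit]
  linarith

theorem stmt9 (p : ℝ) (hp : 1 < p) :
    ∀ x > (0:ℝ), p * (sinhp p x / x) + tanhp p x / x > 1 + p := by
  intro x hx
  have hp0 : (0:ℝ) < p := lt_trans one_pos hp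
  -- surjectivity: find a preimage of x
  set S : ℝ := Real.exp (x * 2 ^ (1 / p)) with hS_def
  have hS1 : (1:ℝ) ≤ S := by
    rw [hS_def]
    apply Real.one_le_exp
    positivity
  have hxle : x ≤ arsinhp p S := by
    refine le_trans ?_ (stmt9_arsinhp_lower hp hS1)
    rw [hS_def, Real.log_exp]
    have : (2:ℝ) ^ (-1 / p) * (x * 2 ^ (1 / p)) = x * ((2:ℝ) ^ (-1 / p) * 2 ^ (1 / p)) := by
      ring
    rw [this, ← Real.rpow_add two_pos]
    have h0 : -1 / p + 1 / p = 0 := by ring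
    rw [h0, Real.rpow_zero, mul_one]
  have hcontI : ContinuousOn (arsinhp p) (Set.Icc 0 S) := by
    have hint : MeasureTheory.IntegrableOn (fun t : ℝ => (1 + t ^ p) ^ (-1 / p))
        (Set.uIcc 0 S) MeasureTheory.volume := by
      apply ContinuousOn.integrableOn_compact isCompact_uIcc
      apply (stmt9_contOn_F hp).mono
      rw [Set.uIcc_of_le (by linarith : (0:ℝ) ≤ S)]
      exact fun t ht => ht.1
    have := intervalIntegral.continuousOn_primitive_interval hint
    rw [Set.uIcc_of_le (by linarith : (0:ℝ) ≤ S)] at this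
    exact this
  have hsub := intermediate_value_Icc (by linarith : (0:ℝ) ≤ S) hcontI
  have hxmem : x ∈ Set.Icc (arsinhp p 0) (arsinhp p S) := by
    rw [stmt9_arsinhp_zero]
    exact ⟨hx.le, hxle⟩
  obtain ⟨s₀, hs₀, hs₀x⟩ := hsub hxmem
  have hmem : ∃ a ∈ Set.Ici (0:ℝ), arsinhp p a = x := ⟨s₀, hs₀.1, hs₀x⟩
  have hs_mem : sinhp p x ∈ Set.Ici (0:ℝ) := Function.invFunOn_mem hmem
  have hs_eq : arsinhp p (sinhp p x) = x := Function.invFunOn_eq hmem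
  set s : ℝ := sinhp p x with hs_def
  have hs_pos : 0 < s := by
    rcases eq_or_lt_of_le (Set.mem_Ici.mp hs_mem : (0:ℝ) ≤ s) with h | h
    · exfalso
      rw [← h, stmt9_arsinhp_zero] at hs_eq
      linarith
    · exact h
  have key := stmt9_main_ineq hp hs_pos
  rw [hs_eq] at key
  -- rewrite in terms of coshp / tanhp
  have hbase : (0:ℝ) < 1 + s ^ p := by
    have : (0:ℝ) < s ^ p := Real.rpow_pos_of_pos hs_pos p
    linarith
  have hC : (0:ℝ) < (1 + s ^ p) ^ (1 / p) := Real.rpow_pos_of_pos hbase _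
  have hrw : s * (1 + s ^ p) ^ (-1 / p) = s / (1 + s ^ p) ^ (1 / p) := by
    rw [neg_div, Real.rpow_neg hbase.le]
    exact (div_eq_mul_inv _ _).symm
  rw [hrw] at key
  have htanh : tanhp p x = s / (1 + s ^ p) ^ (1 / p) := by
    rw [tanhp, coshp, ← hs_def]
  rw [gt_iff_lt, htanh]
  have hcomb : p * (s / x) + s / (1 + s ^ p) ^ (1 / p) / x
      = (p * s + s / (1 + s ^ p) ^ (1 / p)) / x := by
    ring
  rw [hcomb, lt_div_iff₀ hx]
  linarith
end

section
/- (Wilker-type inequality.) Let p > 1. Then for all x > 0, (sinh_p(x)/x)^p + tanh_p(x)/x > 2. -/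
open Real Set Filter Topology

open MeasureTheory intervalIntegral

noncomputable def Fp (p : ℝ) (t : ℝ) : ℝ := (1 + t ^ p) ^ (-1 / p)

section
variable {p : ℝ} (hp : 1 < p)
include hp

lemma hp0 : 0 < p := lt_trans one_pos hp

lemma Fp_contAt {t : ℝ} (ht : 0 ≤ t) : ContinuousAt (Fp p) t := by
  have h1 : ContinuousAt (fun t : ℝ => 1 + t ^ p) t :=
    continuousAt_const.add (Real.continuousAt_rpow_const t p (Or.inr (hp0 hp).le))
  have hpos : (0:ℝ) < 1 + t ^ p := by
    have := Real.rpow_nonneg ht p; linarith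
  have h2 : ContinuousAt (fun z : ℝ => z ^ (-1 / p)) (1 + t ^ p) :=
    Real.continuousAt_rpow_const _ _ (Or.inl hpos.ne')
  exact ContinuousAt.comp (f := fun t : ℝ => 1 + t ^ p) h2 h1

lemma Fp_contOn : ContinuousOn (Fp p) (Ici 0) :=
  fun t ht => (Fp_contAt hp ht).continuousWithinAt

lemma Fp_pos {t : ℝ} (ht : 0 ≤ t) : 0 < Fp p t := by
  have hpos : (0:ℝ) < 1 + t ^ p := by
    have := Real.rpow_nonneg ht p; linarith
  exact Real.rpow_pos_of_pos hpos _

lemma Fp_intble {y : ℝ} (hy : 0 ≤ y) : IntervalIntegrable (Fp p) volume 0 y :=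
  ContinuousOn.intervalIntegrable_of_Icc hy ((Fp_contOn hp).mono Icc_subset_Ici_self)

lemma arsinhp_hasDeriv {y : ℝ} (hy : 0 < y) : HasDerivAt (arsinhp p) (Fp p y) y := by
  show HasDerivAt (fun u => ∫ t in (0:ℝ)..u, Fp p t) (Fp p y) y
  exact intervalIntegral.integral_hasDerivAt_right (Fp_intble hp hy.le)
    ⟨Ioi 0, Ioi_mem_nhds hy,
      ((Fp_contOn hp).mono Ioi_subset_Ici_self).aestronglyMeasurable measurableSet_Ioi⟩
    (Fp_contAt hp hy.le)

lemma arsinhp_contOn {Y : ℝ} (hY : 0 ≤ Y) : ContinuousOn (arsinhp p) (Icc 0 Y) := by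
  have h := intervalIntegral.continuousOn_primitive (μ := volume) (f := Fp p) (a := 0) (b := Y)
    (((Fp_contOn hp).mono Icc_subset_Ici_self).integrableOn_Icc)
  refine h.congr fun x hx => ?_
  exact intervalIntegral.integral_of_le hx.1

lemma arsinhp_zero : arsinhp p 0 = 0 := intervalIntegral.integral_same

end

noncomputable def gp (p : ℝ) (y : ℝ) : ℝ := y * (1 + y ^ p) ^ (-((p * (p + 1))⁻¹))

section
variable {p : ℝ} (hp : 1 < p)
include hp

lemma gp_contAt {t : ℝ} (ht : 0 ≤ t) : ContinuousAt (gp p) t := by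
  have h1 : ContinuousAt (fun t : ℝ => 1 + t ^ p) t :=
    continuousAt_const.add (Real.continuousAt_rpow_const t p (Or.inr (hp0 hp).le))
  have hpos : (0:ℝ) < 1 + t ^ p := by
    have := Real.rpow_nonneg ht p; linarith
  have h2 : ContinuousAt (fun z : ℝ => z ^ (-((p * (p + 1))⁻¹))) (1 + t ^ p) :=
    Real.continuousAt_rpow_const _ _ (Or.inl hpos.ne')
  exact continuousAt_id.mul (ContinuousAt.comp (f := fun t : ℝ => 1 + t ^ p) h2 h1)

lemma gp_deriv_gt {y : ℝ} (hy : 0 < y) : ∃ d, HasDerivAt (gp p) d y ∧ Fp p y < d := by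
  set q : ℝ := (p * (p + 1))⁻¹ with hq
  have hp1 : (0:ℝ) < p + 1 := by linarith
  have hq0 : 0 < q := by positivity
  have hs : 0 < y ^ p := Real.rpow_pos_of_pos hy p
  set u : ℝ := 1 + y ^ p with hu
  have hu1 : 1 < u := by linarith
  have hu0 : 0 < u := by linarith
  have h1 : HasDerivAt (fun y : ℝ => 1 + y ^ p) (p * y ^ (p - 1)) y :=
    (Real.hasDerivAt_rpow_const (Or.inl hy.ne')).const_add 1
  have h2 : HasDerivAt (fun z : ℝ => z ^ (-q)) (-q * u ^ (-q - 1)) u :=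
    Real.hasDerivAt_rpow_const (Or.inl hu0.ne')
  have h3 : HasDerivAt (fun y : ℝ => (1 + y ^ p) ^ (-q))
      (-q * u ^ (-q - 1) * (p * y ^ (p - 1))) y :=
    HasDerivAt.comp (h₂ := fun z : ℝ => z ^ (-q)) y h2 h1
  have h4 : HasDerivAt (gp p)
      (1 * (1 + y ^ p) ^ (-q) + y * (-q * u ^ (-q - 1) * (p * y ^ (p - 1)))) y :=
    (hasDerivAt_id y).mul h3
  refine ⟨_, h4, ?_⟩
  -- now the inequality
  have hyy : y * y ^ (p - 1) = y ^ p := by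
    calc y * y ^ (p - 1) = y ^ (1:ℝ) * y ^ (p - 1) := by rw [Real.rpow_one]
      _ = y ^ (1 + (p - 1)) := (Real.rpow_add hy _ _).symm
      _ = y ^ p := by ring_nf
  have hrw : 1 * (1 + y ^ p) ^ (-q) + y * (-q * u ^ (-q - 1) * (p * y ^ (p - 1)))
      = u ^ (-q - 1) * (u - (p + 1)⁻¹ * (u - 1)) := by
    have e1 : (1 + y ^ p) ^ (-q) = u ^ (1 + (-q - 1)) := by rw [← hu]; ring_nf
    rw [e1, Real.rpow_add hu0, Real.rpow_one]
    have e2 : y * (-q * u ^ (-q - 1) * (p * y ^ (p - 1)))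
        = -(q * p) * (u - 1) * u ^ (-q - 1) := by
      have : u - 1 = y ^ p := by rw [hu]; ring
      rw [this, ← hyy]; ring
    rw [e2]
    have e3 : q * p = (p + 1)⁻¹ := by
      rw [hq]; field_simp
    rw [e3]; ring
  rw [hrw]
  set α : ℝ := p / (p + 1) with hα
  have hα1 : 0 < α := by positivity
  have hα2 : α < 1 := by
    rw [hα, div_lt_one hp1]; linarith
  have hB : u ^ α < 1 + α * (u - 1) := by
    have := rpow_one_add_lt_one_add_mul_self (s := u - 1)
      (by linarith) (by intro h; nlinarith) hα1 hα2
    have e : 1 + (u - 1) = u := by ring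
    rwa [e] at this
  have e4 : u - (p + 1)⁻¹ * (u - 1) = 1 + α * (u - 1) := by
    rw [hα]; field_simp; ring
  have e5 : Fp p y = u ^ (-q - 1) * u ^ α := by
    rw [← Real.rpow_add hu0]
    have : -q - 1 + α = -1 / p := by
      rw [hq, hα]; field_simp; ring
    rw [this]; rfl
  rw [e5, e4]
  exact mul_lt_mul_of_pos_left hB (Real.rpow_pos_of_pos hu0 _)

lemma arsinhp_lt_gp {y : ℝ} (hy : 0 < y) : arsinhp p y < gp p y := by
  set h : ℝ → ℝ := fun t => gp p t - arsinhp p t with hh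
  have hcontg : ContinuousOn (gp p) (Icc 0 y) :=
    fun t ht => (gp_contAt hp ht.1).continuousWithinAt
  have hcont : ContinuousOn h (Icc 0 y) := hcontg.sub (arsinhp_contOn hp hy.le)
  have hmono : StrictMonoOn h (Icc 0 y) := by
    apply strictMonoOn_of_deriv_pos (convex_Icc 0 y) hcont
    intro t ht
    rw [interior_Icc] at ht
    obtain ⟨d, hd, hlt⟩ := gp_deriv_gt hp ht.1
    have : HasDerivAt h (d - Fp p t) t := hd.sub (arsinhp_hasDeriv hp ht.1)
    rw [this.deriv]
    have := Fp_pos hp (t := t) ht.1.le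
    linarith
  have h0 : h 0 = 0 := by
    simp [hh, gp, arsinhp_zero hp]
  have := hmono (left_mem_Icc.mpr hy.le) (right_mem_Icc.mpr hy.le) hy
  rw [h0] at this
  simp only [hh] at this
  linarith

end

section
variable {p : ℝ} (hp : 1 < p)
include hp

lemma one_add_rpow_le {t : ℝ} (ht : 0 ≤ t) : 1 + t ^ p ≤ (1 + t) ^ p := by
  have h := NNReal.coe_le_coe.2 (NNReal.add_rpow_le_rpow_add (1 : NNReal) t.toNNReal hp.le)
  push_cast [NNReal.coe_rpow, Real.coe_toNNReal t ht] at h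
  simpa [Real.one_rpow] using h

lemma log_le_arsinhp {y : ℝ} (hy : 0 ≤ y) : log (1 + y) ≤ arsinhp p y := by
  have hcont : ContinuousOn (fun t : ℝ => (1 + t)⁻¹) (Icc 0 y) := by
    apply ContinuousOn.inv₀
    · fun_prop
    · intro t ht
      have h0 : (0:ℝ) ≤ t := ht.1
      positivity
  have hint1 : IntervalIntegrable (fun t : ℝ => (1 + t)⁻¹) volume 0 y :=
    ContinuousOn.intervalIntegrable_of_Icc hy hcont
  have hmono : (∫ t in (0:ℝ)..y, (1 + t)⁻¹) ≤ arsinhp p y := by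
    apply intervalIntegral.integral_mono_on hy hint1 (Fp_intble hp hy)
    intro t ht
    have ht0 : (0:ℝ) ≤ t := ht.1
    have h1t : (0:ℝ) < 1 + t := by linarith
    have h1tp : (0:ℝ) < 1 + t ^ p := by
      have := Real.rpow_nonneg ht0 p; linarith
    have hle : ((1 + t) ^ p) ^ (-1 / p) ≤ (1 + t ^ p) ^ (-1 / p) :=
      Real.rpow_le_rpow_of_nonpos h1tp (one_add_rpow_le hp ht0)
        (by rw [neg_div]; exact neg_nonpos.mpr (by positivity))
    have heq : ((1 + t) ^ p) ^ (-1 / p) = (1 + t)⁻¹ := by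
      rw [← Real.rpow_mul h1t.le, show p * (-1 / p) = -1 by field_simp, Real.rpow_neg_one]
    show (1 + t)⁻¹ ≤ (1 + t ^ p) ^ (-1 / p)
    rw [← heq]; exact hle
  have hcalc : (∫ t in (0:ℝ)..y, (1 + t)⁻¹) = log (1 + y) := by
    have h1 : (∫ t in (0:ℝ)..y, ((1:ℝ) + t)⁻¹)
        = ∫ t in ((1:ℝ) + 0)..((1:ℝ) + y), t⁻¹ :=
      intervalIntegral.integral_comp_add_left (fun x : ℝ => x⁻¹) 1
    rw [h1]
    rw [integral_inv (by rw [uIcc_of_le (by linarith)]; intro h; have := h.1; linarith)]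
    norm_num
  linarith

lemma arsinhp_surj {x : ℝ} (hx : 0 < x) : ∃ y ∈ Ici (0:ℝ), arsinhp p y = x := by
  set Y : ℝ := Real.exp x with hY
  have hY0 : 0 < Y := exp_pos x
  have hfY : x ≤ arsinhp p Y := by
    have h1 : x < log (1 + Y) := by
      nth_rewrite 1 [← Real.log_exp x]
      exact Real.log_lt_log (exp_pos x) (by linarith)
    have h2 := log_le_arsinhp hp hY0.le
    linarith
  have hmem : x ∈ Icc (arsinhp p 0) (arsinhp p Y) := by
    rw [arsinhp_zero hp]; exact ⟨hx.le, hfY⟩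
  obtain ⟨y, hy, hfy⟩ := intermediate_value_Icc hY0.le (arsinhp_contOn hp hY0.le) hmem
  exact ⟨y, hy.1, hfy⟩

end

theorem stmt10 (p : ℝ) (hp : 1 < p) :
    ∀ x > (0:ℝ), (sinhp p x / x) ^ p + tanhp p x / x > 2 := by
  intro x hx
  have hex := arsinhp_surj hp hx
  have hmem : sinhp p x ∈ Ici (0:ℝ) := Function.invFunOn_mem hex
  have heq : arsinhp p (sinhp p x) = x := Function.invFunOn_eq hex
  simp only [gt_iff_lt, tanhp, coshp]
  set s : ℝ := sinhp p x with hsdef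
  have hs0 : 0 < s := by
    rcases eq_or_lt_of_le (mem_Ici.mp hmem) with h | h
    · exfalso
      rw [← h, arsinhp_zero hp] at heq
      exact hx.ne' heq.symm
    · exact h
  have hp0' : (0:ℝ) < p := hp0 hp
  have hp1 : (0:ℝ) < p + 1 := by linarith
  have hkey : x < gp p s := heq ▸ arsinhp_lt_gp hp hs0
  have hsp : 0 < s ^ p := Real.rpow_pos_of_pos hs0 p
  set u : ℝ := 1 + s ^ p with hu
  have hu0 : (0:ℝ) < u := by linarith
  have hu1 : (1:ℝ) < u := by linarith
  set q : ℝ := (p * (p + 1))⁻¹ with hq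
  have hq0 : 0 < q := by positivity
  set c : ℝ := u ^ (1 / p) with hc
  have hc0 : 0 < c := Real.rpow_pos_of_pos hu0 _
  -- ratio bound : u ^ q < s / x
  have hratio : u ^ q < s / x := by
    have h1 : x * u ^ q < s * u ^ (-q) * u ^ q :=
      mul_lt_mul_of_pos_right hkey (Real.rpow_pos_of_pos hu0 q)
    rw [mul_assoc, ← Real.rpow_add hu0, neg_add_cancel, Real.rpow_zero, mul_one] at h1
    rw [lt_div_iff₀ hx]
    linarith
  have hcq : c ^ (1 / (p + 1)) = u ^ q := by
    rw [hc, ← Real.rpow_mul hu0.le, hq]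
    congr 1
    field_simp
  -- bound A
  have hA : c ^ (p / (p + 1)) < (s / x) ^ p := by
    have h1 : (u ^ q) ^ p < (s / x) ^ p :=
      Real.rpow_lt_rpow (Real.rpow_pos_of_pos hu0 q).le hratio hp0'
    have h2 : (u ^ q) ^ p = c ^ (p / (p + 1)) := by
      rw [← Real.rpow_mul hu0.le, hc, ← Real.rpow_mul hu0.le]
      congr 1
      rw [hq]
      field_simp
    rwa [h2] at h1
  -- bound B
  have hBpos : 0 < c ^ (-(p / (p + 1))) := Real.rpow_pos_of_pos hc0 _
  have hApos : 0 < c ^ (p / (p + 1)) := Real.rpow_pos_of_pos hc0 _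
  have hB : c ^ (-(p / (p + 1))) < s / c / x := by
    have h1 : u ^ q / c < s / x / c := by gcongr
    have h2 : c ^ (-(p / (p + 1))) = u ^ q / c := by
      rw [← hcq]
      have e : -(p / (p + 1)) = 1 / (p + 1) - 1 := by field_simp; ring
      rw [e, Real.rpow_sub hc0, Real.rpow_one]
    rw [h2, div_right_comm]
    exact h1
  have hprod : 1 < (s / x) ^ p * (s / c / x) := by
    have h1 := mul_lt_mul'' hA hB hApos.le hBpos.le
    rwa [← Real.rpow_add hc0, add_neg_cancel, Real.rpow_zero] at h1
  -- AM-GM finish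
  set a : ℝ := Real.sqrt ((s / x) ^ p) with ha
  set b : ℝ := Real.sqrt (s / c / x) with hb
  have hAnn : (0:ℝ) ≤ (s / x) ^ p := Real.rpow_nonneg (by positivity) p
  have hBnn : (0:ℝ) ≤ s / c / x := by positivity
  have ha2 : a ^ 2 = (s / x) ^ p := Real.sq_sqrt hAnn
  have hb2 : b ^ 2 = s / c / x := Real.sq_sqrt hBnn
  have h2ab : 2 * a * b ≤ a ^ 2 + b ^ 2 := two_mul_le_add_sq a b
  have hab1 : 1 < a * b := by
    have habnn : 0 ≤ a * b := mul_nonneg (Real.sqrt_nonneg _) (Real.sqrt_nonneg _)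
    have hsq : 1 < (a * b) ^ 2 := by
      rw [mul_pow, ha2, hb2]; exact hprod
    nlinarith
  rw [← ha2, ← hb2]
  nlinarith
end

section
/- (Cusa–Huygens-type inequality.) Let 1 < p ≤ 2. Then for all x ∈ (0, π_p/2], sin_p(x)/x < (cos_p(x) + p)/(1 + p) ≤ (cos_p(x) + 2)/3. -/
open Real Set Filter Topology MeasureTheory

namespace CusaAux

variable {p : ℝ}

lemma fp_meas (p : ℝ) : Measurable (fun t : ℝ => (1 - t ^ p) ^ (-1 / p)) := by fun_prop

lemma rpow_lt_one' (hp0 : 0 < p) {t : ℝ} (ht0 : 0 ≤ t) (ht1 : t < 1) : t ^ p < 1 :=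
  Real.rpow_lt_one ht0 ht1 hp0

lemma fp_pos (hp0 : 0 < p) {t : ℝ} (ht0 : 0 ≤ t) (ht1 : t < 1) :
    0 < (1 - t ^ p) ^ (-1 / p) :=
  Real.rpow_pos_of_pos (by linarith [rpow_lt_one' hp0 ht0 ht1]) _

lemma fp_contAt (hp1 : 1 < p) {t : ℝ} (ht0 : 0 ≤ t) (ht1 : t < 1) :
    ContinuousAt (fun t : ℝ => (1 - t ^ p) ^ (-1 / p)) t := by
  have h1 : ContinuousAt (fun t : ℝ => 1 - t ^ p) t :=
    continuousAt_const.sub (Real.continuousAt_rpow_const t p (Or.inr (by linarith)))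
  have h2 : (1 : ℝ) - t ^ p ≠ 0 := by
    have := rpow_lt_one' (by linarith : (0:ℝ) < p) ht0 ht1; linarith
  exact h1.rpow_const (Or.inl h2)

lemma fp_intable (hp1 : 1 < p) :
    IntervalIntegrable (fun t : ℝ => (1 - t ^ p) ^ (-1 / p)) volume 0 1 := by
  have hp0 : (0:ℝ) < p := by linarith
  have hg : IntervalIntegrable (fun t : ℝ => (1 - t) ^ (-1 / p)) volume 0 1 := by
    have h : (-1 : ℝ) < -1 / p := by
      rw [neg_div]
      have : 1 / p < 1 := by rw [div_lt_one hp0]; exact hp1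
      linarith
    have := (intervalIntegral.intervalIntegrable_rpow' (a := 0) (b := 1) h).comp_sub_left 1
    simpa using this.symm
  apply hg.mono_fun ((fp_meas p).aestronglyMeasurable.restrict)
  rw [EventuallyLE, ae_restrict_iff' measurableSet_uIoc]
  filter_upwards with t ht
  rw [Set.uIoc_of_le (by norm_num : (0:ℝ) ≤ 1)] at ht
  obtain ⟨ht0, ht1⟩ := ht
  have htp : t ^ p ≤ 1 := Real.rpow_le_one ht0.le ht1 hp0.le
  have h1 : (0:ℝ) ≤ 1 - t ^ p := by linarith
  rw [Real.norm_of_nonneg (Real.rpow_nonneg h1 _),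
    Real.norm_of_nonneg (Real.rpow_nonneg (by linarith) _)]
  rcases eq_or_lt_of_le ht1 with h | h
  · subst h
    simp [Real.one_rpow]
  · have htt : t ^ p ≤ t := by
      calc t ^ p ≤ t ^ (1:ℝ) :=
        Real.rpow_le_rpow_of_exponent_ge ht0 h.le (by linarith)
      _ = t := Real.rpow_one t
    exact Real.rpow_le_rpow_of_nonpos (by linarith) (by linarith)
      (by rw [neg_div]; simp; positivity)

lemma fp_intable' (hp1 : 1 < p) {a b : ℝ} (ha : a ∈ Icc (0:ℝ) 1) (hb : b ∈ Icc (0:ℝ) 1) :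
    IntervalIntegrable (fun t : ℝ => (1 - t ^ p) ^ (-1 / p)) volume a b := by
  apply (fp_intable hp1).mono_set
  apply Set.uIcc_subset_uIcc <;> rw [Set.uIcc_of_le (by norm_num : (0:ℝ) ≤ 1)]
  exacts [ha, hb]


lemma arcsinp_zero : arcsinp p 0 = 0 := intervalIntegral.integral_same

lemma arcsinp_strictMono (hp1 : 1 < p) : StrictMonoOn (arcsinp p) (Icc 0 1) := by
  intro a ha b hb hab
  have hint_ab := fp_intable' hp1 ha hb
  have hint_0a := fp_intable' hp1 (Set.left_mem_Icc.2 zero_le_one) ha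
  have hsplit : arcsinp p a + ∫ t in a..b, (1 - t ^ p) ^ (-1 / p) = arcsinp p b :=
    intervalIntegral.integral_add_adjacent_intervals hint_0a hint_ab
  have hpos : 0 < ∫ t in a..b, (1 - t ^ p) ^ (-1 / p) := by
    apply intervalIntegral.intervalIntegral_pos_of_pos_on hint_ab _ hab
    intro t ht
    exact fp_pos (by linarith) (le_of_lt (lt_of_le_of_lt ha.1 ht.1)) (lt_of_lt_of_le ht.2 hb.2)
  linarith

lemma arcsinp_contOn (hp1 : 1 < p) : ContinuousOn (arcsinp p) (Icc 0 1) := by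
  have h := intervalIntegral.continuousOn_primitive_interval
    (a := 0) (b := 1) (μ := volume)
    (f := fun t : ℝ => (1 - t ^ p) ^ (-1 / p)) ?_
  · rwa [Set.uIcc_of_le (by norm_num : (0:ℝ) ≤ 1)] at h
  · rw [Set.uIcc_of_le (by norm_num : (0:ℝ) ≤ 1),
      ← intervalIntegrable_iff_integrableOn_Icc_of_le (by norm_num : (0:ℝ) ≤ 1)]
    exact fp_intable' hp1 (Set.left_mem_Icc.2 zero_le_one) (Set.right_mem_Icc.2 zero_le_one)

lemma arcsinp_hasDeriv (hp1 : 1 < p) {σ : ℝ} (h0 : 0 < σ) (h1 : σ < 1) :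
    HasDerivAt (arcsinp p) ((1 - σ ^ p) ^ (-1 / p)) σ := by
  exact intervalIntegral.integral_hasDerivAt_right
    (fp_intable' hp1 (Set.left_mem_Icc.2 zero_le_one) ⟨h0.le, h1.le⟩)
    ((fp_meas p).aestronglyMeasurable.stronglyMeasurableAtFilter)
    (fp_contAt hp1 h0.le h1)

lemma arcsinp_pos (hp1 : 1 < p) {σ : ℝ} (h0 : 0 < σ) (h1 : σ ≤ 1) : 0 < arcsinp p σ := by
  have := arcsinp_strictMono hp1 (Set.left_mem_Icc.2 zero_le_one) ⟨h0.le, h1⟩ h0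
  rwa [arcsinp_zero] at this

lemma arcsinp_tangent (hp1 : 1 < p) {σ : ℝ} (h0 : 0 < σ) (h1 : σ < 1) :
    arcsinp p σ < σ * (1 - σ ^ p) ^ (-1 / p) := by
  have hp0 : (0:ℝ) < p := by linarith
  set M : ℝ := (1 - σ ^ p) ^ (-1 / p) with hM
  have hint : IntervalIntegrable (fun t : ℝ => (1 - t ^ p) ^ (-1 / p)) volume 0 σ :=
    fp_intable' hp1 (Set.left_mem_Icc.2 zero_le_one) ⟨h0.le, h1.le⟩
  have hpos : 0 < ∫ t in (0:ℝ)..σ, (M - (1 - t ^ p) ^ (-1 / p)) := by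
    apply intervalIntegral.intervalIntegral_pos_of_pos_on (intervalIntegrable_const.sub hint) _ h0
    intro t ht
    have htp : t ^ p < σ ^ p := Real.rpow_lt_rpow ht.1.le ht.2 hp0
    have hu : (0:ℝ) < 1 - σ ^ p := by
      have := rpow_lt_one' hp0 h0.le h1; linarith
    have : (1 - t ^ p) ^ (-1 / p) < M := by
      apply Real.rpow_lt_rpow_of_neg hu (by linarith) (by rw [neg_div]; simp; positivity)
    linarith
  have heq : (∫ t in (0:ℝ)..σ, (M - (1 - t ^ p) ^ (-1 / p)))
      = σ * M - arcsinp p σ := by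
    rw [intervalIntegral.integral_sub intervalIntegrable_const hint,
      intervalIntegral.integral_const]
    simp [arcsinp, smul_eq_mul]
  rw [heq] at hpos
  linarith

noncomputable def Cf (p σ : ℝ) : ℝ := (1 - σ ^ p) ^ (1 / p)
noncomputable def Bf (p σ : ℝ) : ℝ := σ ^ (p - 1) * (1 - σ ^ p) ^ ((2 - p) / p) * arcsinp p σ
noncomputable def Psi (p σ : ℝ) : ℝ := p * (1 - Cf p σ) - Bf p σ
noncomputable def Phi (p σ : ℝ) : ℝ := (Cf p σ + p) * arcsinp p σ - (1 + p) * σ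

lemma Cf_contOn (hp1 : 1 < p) : ContinuousOn (Cf p) (Icc 0 1) := by
  intro σ _
  apply ContinuousAt.continuousWithinAt
  exact (continuousAt_const.sub
    (Real.continuousAt_rpow_const σ p (Or.inr (by linarith)))).rpow_const
    (Or.inr (by positivity))

lemma Psi_contOn (hp1 : 1 < p) (hp2 : p ≤ 2) : ContinuousOn (Psi p) (Icc 0 1) := by
  have hB : ContinuousOn (Bf p) (Icc 0 1) := by
    apply ContinuousOn.mul _ (arcsinp_contOn hp1)
    intro σ _
    apply ContinuousAt.continuousWithinAt
    apply ContinuousAt.mul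
    · exact (Real.continuousAt_rpow_const σ (p-1) (Or.inr (by linarith)))
    · exact (continuousAt_const.sub
        (Real.continuousAt_rpow_const σ p (Or.inr (by linarith)))).rpow_const
        (Or.inr (div_nonneg (by linarith) (by linarith)))
  exact (continuousOn_const.mul (continuousOn_const.sub (Cf_contOn hp1))).sub hB

lemma Phi_contOn (hp1 : 1 < p) : ContinuousOn (Phi p) (Icc 0 1) :=
  (((Cf_contOn hp1).add continuousOn_const).mul (arcsinp_contOn hp1)).sub
    (continuousOn_const.mul continuousOn_id)

lemma inner_hasDeriv (hp1 : 1 < p) (σ : ℝ) :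
    HasDerivAt (fun σ : ℝ => 1 - σ ^ p) (-(p * σ ^ (p - 1))) σ := by
  simpa using (Real.hasDerivAt_rpow_const (x := σ) (p := p) (Or.inr hp1.le)).const_sub 1

lemma Cf_hasDeriv (hp1 : 1 < p) {σ : ℝ} (h0 : 0 < σ) (h1 : σ < 1) :
    HasDerivAt (Cf p) (-(σ ^ (p - 1) * (1 - σ ^ p) ^ (1 / p - 1))) σ := by
  have hp0 : (0:ℝ) < p := by linarith
  have hu : (0:ℝ) < 1 - σ ^ p := by have := rpow_lt_one' hp0 h0.le h1; linarith
  have h := (inner_hasDeriv hp1 σ).rpow_const (p := 1/p) (Or.inl hu.ne')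
  convert h using 1
  · rfl
  field_simp

lemma Psi_pos (hp1 : 1 < p) (hp2 : p ≤ 2) {σ : ℝ} (h0 : 0 < σ) (h1 : σ ≤ 1) :
    0 < Psi p σ := by
  have hp0 : (0:ℝ) < p := by linarith
  have hmono : StrictMonoOn (Psi p) (Icc 0 1) := by
    apply strictMonoOn_of_deriv_pos (convex_Icc 0 1) (Psi_contOn hp1 hp2)
    rw [interior_Icc]
    rintro τ ⟨ht0, ht1⟩
    have hu : (0:ℝ) < 1 - τ ^ p := by have := rpow_lt_one' hp0 ht0.le ht1; linarith
    -- derivative of Bf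
    have h1' : HasDerivAt (fun σ : ℝ => σ ^ (p-1)) ((p-1) * τ ^ (p-1-1)) τ :=
      Real.hasDerivAt_rpow_const (Or.inl ht0.ne')
    have h2 : HasDerivAt (fun σ : ℝ => (1 - σ ^ p) ^ ((2-p)/p))
        ((-(p * τ ^ (p-1))) * ((2-p)/p) * (1 - τ ^ p) ^ ((2-p)/p - 1)) τ :=
      (inner_hasDeriv hp1 τ).rpow_const (Or.inl hu.ne')
    have h3 := arcsinp_hasDeriv hp1 ht0 ht1
    have hB := (h1'.mul h2).mul h3
    have hC := Cf_hasDeriv hp1 ht0 ht1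
    have hPsi := ((hC.const_sub 1).const_mul p).sub hB
    have hPsi2 : HasDerivAt (Psi p) _ τ := hPsi
    rw [hPsi2.deriv]
    -- now pure inequality
    set a : ℝ := τ ^ (p-1) with ha
    set a2 : ℝ := τ ^ (p-1-1) with ha2
    set w : ℝ := (1 - τ ^ p) ^ ((2-p)/p) with hw
    set w1 : ℝ := (1 - τ ^ p) ^ ((2-p)/p - 1) with hw1
    set v1 : ℝ := (1 - τ ^ p) ^ (1/p - 1) with hv1
    set m : ℝ := (1 - τ ^ p) ^ (-1/p) with hm
    set A : ℝ := arcsinp p τ with hA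
    have hapos : 0 < a := Real.rpow_pos_of_pos ht0 _
    have ha2pos : 0 < a2 := Real.rpow_pos_of_pos ht0 _
    have hwpos : 0 < w := Real.rpow_pos_of_pos hu _
    have hw1pos : 0 < w1 := Real.rpow_pos_of_pos hu _
    have hmpos : 0 < m := Real.rpow_pos_of_pos hu _
    have hApos : 0 < A := arcsinp_pos hp1 ht0 ht1.le
    have htan : A < τ * m := arcsinp_tangent hp1 ht0 ht1
    have f1 : w * m = v1 := by
      rw [hw, hm, hv1, ← Real.rpow_add hu]
      congr 1
      field_simp
      ring
    have f2 : a2 * τ = a := by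
      rw [ha2, ha, ← Real.rpow_add_one ht0.ne']
      ring_nf
    have key : (p-1) * a2 * w * A < (p-1) * a * v1 := by
      calc (p-1) * a2 * w * A < (p-1) * a2 * w * (τ * m) := by
            apply mul_lt_mul_of_pos_left htan
            exact mul_pos (mul_pos (by linarith) ha2pos) hwpos
        _ = (p-1) * a * v1 := by rw [← f2, ← f1]; ring
    have hnn : 0 ≤ (2-p) * (a * a) * w1 * A :=
      mul_nonneg (mul_nonneg (mul_nonneg (by linarith) (by positivity)) hw1pos.le) hApos.le
    have hgoal : p * - -(a * v1) -
        (((p - 1) * a2 * w + a * (-(p * a) * ((2 - p) / p) * w1)) * A + a * w * m)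
        = (p-1) * (a * v1) + (2-p) * (a * a) * w1 * A - (p-1) * a2 * w * A := by
      rw [← f1]
      field_simp
      ring
    show 0 < p * - -(a * v1) -
        (((p - 1) * a2 * w + a * (-(p * a) * ((2 - p) / p) * w1)) * A + a * w * m)
    rw [hgoal]
    linarith [key, hnn]
  have h := hmono (Set.left_mem_Icc.2 zero_le_one) ⟨h0.le, h1⟩ h0
  have hPsi0 : Psi p 0 = 0 := by
    simp [Psi, Cf, Bf, Real.zero_rpow hp0.ne', Real.one_rpow, arcsinp_zero]
  rwa [hPsi0] at h

lemma Phi_pos (hp1 : 1 < p) (hp2 : p ≤ 2) {σ : ℝ} (h0 : 0 < σ) (h1 : σ ≤ 1) :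
    0 < Phi p σ := by
  have hp0 : (0:ℝ) < p := by linarith
  have hmono : StrictMonoOn (Phi p) (Icc 0 1) := by
    apply strictMonoOn_of_deriv_pos (convex_Icc 0 1) (Phi_contOn hp1)
    rw [interior_Icc]
    rintro τ ⟨ht0, ht1⟩
    have hu : (0:ℝ) < 1 - τ ^ p := by have := rpow_lt_one' hp0 ht0.le ht1; linarith
    have hC := Cf_hasDeriv hp1 ht0 ht1
    have h3 := arcsinp_hasDeriv hp1 ht0 ht1
    have hPhi := ((hC.add_const p).mul h3).sub ((hasDerivAt_id τ).const_mul (1+p))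
    have hPhi2 : HasDerivAt (Phi p) _ τ := hPhi
    rw [hPhi2.deriv]
    set a : ℝ := τ ^ (p-1) with ha
    set w : ℝ := (1 - τ ^ p) ^ ((2-p)/p) with hw
    set v1 : ℝ := (1 - τ ^ p) ^ (1/p - 1) with hv1
    set m : ℝ := (1 - τ ^ p) ^ (-1/p) with hm
    set C : ℝ := (1 - τ ^ p) ^ (1/p) with hC'
    set A : ℝ := arcsinp p τ with hA
    have hapos : 0 < a := Real.rpow_pos_of_pos ht0 _
    have hwpos : 0 < w := Real.rpow_pos_of_pos hu _
    have hmpos : 0 < m := Real.rpow_pos_of_pos hu _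
    have f1 : w * m = v1 := by
      rw [hw, hm, hv1, ← Real.rpow_add hu]
      congr 1
      field_simp
      ring
    have g1 : C * m = 1 := by
      rw [hC', hm, ← Real.rpow_add hu, show 1/p + -1/p = 0 by ring, Real.rpow_zero]
    have hPsiPos : 0 < Psi p τ := Psi_pos hp1 hp2 ht0 ht1.le
    have hPsi' : a * w * A < p * (1 - C) := by
      have : Psi p τ = p * (1 - C) - a * w * A := by rw [Psi, Cf, Bf]
      linarith [hPsiPos, this ▸ hPsiPos]
    have key : a * w * A * m < p * (1 - C) * m :=
      mul_lt_mul_of_pos_right hPsi' hmpos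
    have e : a * w * A * m = a * v1 * A := by rw [← f1]; ring
    have g2 : p * (C * m) = p := by rw [g1, mul_one]
    have hCf : Cf p τ = C := rfl
    rw [hCf]
    nlinarith [key, e, g1, g2]
  have h := hmono (Set.left_mem_Icc.2 zero_le_one) ⟨h0.le, h1⟩ h0
  have hPhi0 : Phi p 0 = 0 := by
    simp [Phi, arcsinp_zero]
  rwa [hPhi0] at h


end CusaAux

open CusaAux in
theorem stmt11 (p : ℝ) (hp1 : 1 < p) (hp2 : p ≤ 2) :
    ∀ x ∈ Set.Ioc 0 (pip p / 2),
      sinp p x / x < (cosp p x + p) / (1 + p) ∧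
      (cosp p x + p) / (1 + p) ≤ (cosp p x + 2) / 3 := by
  have hp0 : (0:ℝ) < p := by linarith
  rintro x ⟨hx0, hx2⟩
  have hpip : pip p / 2 = arcsinp p 1 := by rw [pip]; ring
  have hxmem : x ∈ Icc (arcsinp p 0) (arcsinp p 1) := by
    rw [arcsinp_zero]
    exact ⟨hx0.le, hpip ▸ hx2⟩
  have hex : ∃ s ∈ Icc (0:ℝ) 1, arcsinp p s = x := by
    obtain ⟨s, hs, hsx⟩ := intermediate_value_Icc zero_le_one (arcsinp_contOn hp1) hxmem
    exact ⟨s, hs, hsx⟩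
  have hmem : sinp p x ∈ Icc (0:ℝ) 1 := Function.invFunOn_mem hex
  have heq : arcsinp p (sinp p x) = x := Function.invFunOn_eq hex
  set σ : ℝ := sinp p x with hσ
  have hσ0 : 0 < σ := by
    rcases eq_or_lt_of_le hmem.1 with h | h
    · exfalso
      rw [← h, arcsinp_zero] at heq
      linarith
    · exact h
  have hC : cosp p x = Cf p σ := rfl
  have hPhi' : 0 < (Cf p σ + p) * x - (1 + p) * σ := by
    rw [← heq]
    exact Phi_pos hp1 hp2 hσ0 hmem.2
  have hσp1 : σ ^ p ≤ 1 := Real.rpow_le_one hmem.1 hmem.2 hp0.le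
  have hσp0 : 0 ≤ σ ^ p := Real.rpow_nonneg hmem.1 p
  have hc0 : 0 ≤ Cf p σ := Real.rpow_nonneg (by linarith) _
  have hc1 : Cf p σ ≤ 1 := Real.rpow_le_one (by linarith) (by linarith) (by positivity)
  constructor
  · rw [hC, div_lt_div_iff₀ hx0 (by linarith : (0:ℝ) < 1 + p)]
    linarith
  · rw [hC, div_le_div_iff₀ (by linarith : (0:ℝ) < 1 + p) (by norm_num : (0:ℝ) < 3)]
    nlinarith [mul_nonneg (by linarith : (0:ℝ) ≤ 2 - p) (by linarith : (0:ℝ) ≤ 1 - Cf p σ)]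
end
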